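/- arXiv:1403.2264 — 4 statements merged into one kernel-verified Lean document; each statement's English description precedes it below -/
import Mathlib

section
/- For every positive integer N, the quotient of the unit group (ℤ/Nℤ)^× by its subgroup of squares ((ℤ/Nℤ)^×)² has cardinality exactly 2^{ω(N) − c₁(N)}. (Here ω(N) − c₁(N) is a nonnegative integer.) -/
def c1 (n : ℕ) : ℤ :=
  if n.factorization 2 = 0 ∨ n.factorization 2 = 2 then 0
  else if n.factorization 2 = 1 then 1
  else -1

lemma card_ker_sq {M : Type*} [CommMonoid M] :
    Nat.card (powMonoidHom 2 : Mˣ →* Mˣ).ker = Nat.card {x : M // x ^ 2 = 1} := by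
  apply Nat.card_congr
  refine { toFun := fun u => ⟨(u.1 : M), ?_⟩
           invFun := fun x => ⟨Units.mk x.1 x.1 (by rw [← sq]; exact x.2) (by rw [← sq]; exact x.2), ?_⟩
           left_inv := fun u => ?_, right_inv := fun x => rfl }
  · have hu := u.2
    rw [MonoidHom.mem_ker, powMonoidHom_apply] at hu
    calc (u.1 : M) ^ 2 = ((u.1 ^ 2 : Mˣ) : M) := by rw [Units.val_pow_eq_pow_val]
    _ = 1 := by rw [hu]; rfl
  · rw [MonoidHom.mem_ker, powMonoidHom_apply]
    ext
    rw [Units.val_pow_eq_pow_val]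
    exact x.2
  · ext; rfl

lemma card_quot_range {G : Type*} [Group G] [Finite G] (f : G →* G) :
    Nat.card (G ⧸ f.range) = Nat.card f.ker := by
  have h1 : Nat.card f.range * f.range.index = Nat.card G := Subgroup.card_mul_index _
  have h2 : Nat.card f.ker * f.ker.index = Nat.card G := Subgroup.card_mul_index _
  have h3 : f.ker.index = Nat.card f.range := by
    rw [Subgroup.index_eq_card, Nat.card_congr (QuotientGroup.quotientKerEquivRange f).toEquiv]
  rw [← Subgroup.index_eq_card]
  have hpos : 0 < Nat.card f.range := Nat.card_pos
  have := h1.trans h2.symm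
  rw [h3, mul_comm (Nat.card f.ker)] at this
  exact Nat.eq_of_mul_eq_mul_left hpos this

lemma card_sq1_congr {R S : Type*} [Monoid R] [Monoid S] (e : R ≃* S) :
    Nat.card {x : R // x ^ 2 = 1} = Nat.card {y : S // y ^ 2 = 1} := by
  apply Nat.card_congr
  refine Equiv.subtypeEquiv e.toEquiv fun x => ?_
  show x ^ 2 = 1 ↔ (e x) ^ 2 = 1
  rw [← map_pow]
  exact ⟨fun h => by rw [h, map_one], fun h => e.injective (by rw [h, map_one])⟩

lemma card_sq1_prod {A B : Type*} [Monoid A] [Monoid B] :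
    Nat.card {p : A × B // p ^ 2 = 1}
      = Nat.card {a : A // a ^ 2 = 1} * Nat.card {b : B // b ^ 2 = 1} := by
  rw [← Nat.card_prod]
  apply Nat.card_congr
  exact (Equiv.subtypeEquivRight (fun p => by
    simp [Prod.ext_iff])).trans Equiv.subtypeProdEquivProd

lemma sq1_odd_prime_pow {p k : ℕ} (pp : p.Prime) (hp2 : p ≠ 2) (hk : k ≠ 0) :
    Nat.card {x : ZMod (p ^ k) // x ^ 2 = 1} = 2 := by
  haveI : NeZero (p ^ k) := ⟨pow_ne_zero _ pp.pos.ne'⟩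
  have pz : Prime (p : ℤ) := Nat.prime_iff_prime_int.mp pp
  have hset : {x : ZMod (p ^ k) | x ^ 2 = 1} = {1, -1} := by
    ext x
    simp only [Set.mem_setOf_eq, Set.mem_insert_iff, Set.mem_singleton_iff]
    constructor
    · intro h
      set a : ℤ := (x.val : ℤ) with ha
      have hx : ((a : ℤ) : ZMod (p ^ k)) = x := by
        rw [ha]
        push_cast
        exact ZMod.natCast_rightInverse x
      have key : (p : ℤ) ^ k ∣ (a - 1) * (a + 1) := by
        have h0 : (((a - 1) * (a + 1) : ℤ) : ZMod (p ^ k)) = 0 := by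
          push_cast
          rw [hx]
          linear_combination h
        rw [ZMod.intCast_zmod_eq_zero_iff_dvd] at h0
        push_cast at h0
        exact h0
      have hnot : ¬((p : ℤ) ∣ (a - 1) ∧ (p : ℤ) ∣ (a + 1)) := by
        rintro ⟨h1, h2⟩
        have hd : (p : ℤ) ∣ 2 := by
          have := dvd_sub h2 h1
          simpa using this
        have hle : (p : ℤ) ≤ 2 := Int.le_of_dvd two_pos hd
        have := pp.two_le
        omega
      by_cases hc : (p : ℤ) ∣ (a + 1)
      · have h1 : ¬(p : ℤ) ∣ (a - 1) := fun h' => hnot ⟨h', hc⟩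
        have hcop : IsCoprime ((p : ℤ) ^ k) (a - 1) :=
          (pz.coprime_iff_not_dvd.mpr h1).pow_left
        have hdvd : (p : ℤ) ^ k ∣ (a + 1) := hcop.dvd_of_dvd_mul_left key
        right
        have h0 : ((a + 1 : ℤ) : ZMod (p ^ k)) = 0 := by
          rw [ZMod.intCast_zmod_eq_zero_iff_dvd]
          push_cast
          exact hdvd
        push_cast at h0
        rw [hx] at h0
        exact eq_neg_of_add_eq_zero_left h0
      · have hcop : IsCoprime ((p : ℤ) ^ k) (a + 1) :=
          (pz.coprime_iff_not_dvd.mpr hc).pow_left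
        have hdvd : (p : ℤ) ^ k ∣ (a - 1) := hcop.dvd_of_dvd_mul_right key
        left
        have h0 : ((a - 1 : ℤ) : ZMod (p ^ k)) = 0 := by
          rw [ZMod.intCast_zmod_eq_zero_iff_dvd]
          push_cast
          exact hdvd
        push_cast at h0
        rw [hx] at h0
        exact sub_eq_zero.mp h0
    · rintro (rfl | rfl)
      · rw [one_pow]
      · rw [neg_one_sq]
  have hne : (1 : ZMod (p ^ k)) ≠ -1 := by
    intro he
    have h0 : ((2 : ℤ) : ZMod (p ^ k)) = 0 := by
      push_cast
      linear_combination he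
    rw [ZMod.intCast_zmod_eq_zero_iff_dvd] at h0
    push_cast at h0
    have hp : (p : ℤ) ∣ 2 := dvd_trans (dvd_pow_self _ hk) h0
    have hle : (p : ℤ) ≤ 2 := Int.le_of_dvd two_pos hp
    have := pp.two_le
    omega
  have : Nat.card {x : ZMod (p ^ k) // x ^ 2 = 1} = Set.ncard {x : ZMod (p ^ k) | x ^ 2 = 1} :=
    Nat.card_coe_set_eq _
  rw [this, hset, Set.ncard_pair hne]

lemma sq1_two : Nat.card {x : ZMod 2 // x ^ 2 = 1} = 1 := by
  rw [Nat.card_eq_fintype_card]; decide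

lemma sq1_four : Nat.card {x : ZMod 4 // x ^ 2 = 1} = 2 := by
  rw [Nat.card_eq_fintype_card]; decide

lemma sq1_two_pow_big {k : ℕ} (hk : 3 ≤ k) :
    Nat.card {x : ZMod (2 ^ k) // x ^ 2 = 1} = 4 := by
  haveI : NeZero (2 ^ k) := ⟨pow_ne_zero _ two_ne_zero⟩
  set t : ZMod (2 ^ k) := 2 ^ (k - 1) with htdef
  have h2k : (2 : ZMod (2 ^ k)) ^ k = 0 := by
    have := ZMod.natCast_self (2 ^ k)
    push_cast at this
    exact this
  have ht2 : t * 2 = 0 := by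
    rw [htdef, ← pow_succ, show k - 1 + 1 = k by omega, h2k]
  have htt : t * t = 0 := by
    rw [htdef, ← pow_add, show k - 1 + (k - 1) = k + (k - 2) by omega, pow_add, h2k, zero_mul]
  have notdvd : ∀ z : ℤ, 0 < z → z < 2 ^ k → ¬ ((2 : ℤ) ^ k ∣ z) := by
    intro z h1 h2 hd
    have := Int.le_of_dvd h1 hd
    omega
  have hlb : (4 : ℤ) ≤ 2 ^ (k - 1) := by
    calc (4 : ℤ) = 2 ^ 2 := by norm_num
    _ ≤ 2 ^ (k - 1) := pow_le_pow_right₀ (by norm_num) (by omega)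
  have hub : (2 : ℤ) ^ (k - 1) * 2 = 2 ^ k := by
    rw [← pow_succ, show k - 1 + 1 = k by omega]
  -- generic tool to derive contradictions from equalities
  have hcast : ∀ z : ℤ, ((z : ℤ) : ZMod (2 ^ k)) = 0 → (2 : ℤ) ^ k ∣ z := by
    intro z hz
    rw [ZMod.intCast_zmod_eq_zero_iff_dvd] at hz
    push_cast at hz
    exact hz
  have hset : {x : ZMod (2 ^ k) | x ^ 2 = 1} = {1, -1, t + 1, t - 1} := by
    ext x
    simp only [Set.mem_setOf_eq, Set.mem_insert_iff, Set.mem_singleton_iff]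
    constructor
    · intro h
      set a : ℤ := (x.val : ℤ) with ha
      have hx : ((a : ℤ) : ZMod (2 ^ k)) = x := by
        rw [ha]; push_cast; exact ZMod.natCast_rightInverse x
      have key : (2 : ℤ) ^ k ∣ (a - 1) * (a + 1) := by
        apply hcast
        push_cast
        rw [hx]
        linear_combination h
      have h2 : (2 : ℤ) ∣ (a - 1) * (a + 1) := dvd_trans (dvd_pow_self 2 (by omega)) key
      rcases Int.even_or_odd a with ⟨b, hb⟩ | ⟨b, hb⟩
      · exfalso
        have he : (a - 1) * (a + 1) = 4 * (b * b) - 1 := by rw [hb]; ring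
        rw [he] at h2
        obtain ⟨c, hc⟩ : ∃ c, b * b = c := ⟨_, rfl⟩
        rw [hc] at h2
        omega
      · -- a = 2b + 1
        have hpow4 : (2 : ℤ) ^ k = 2 ^ (k - 2) * 4 := by
          rw [show k = k - 2 + 2 by omega]
          rw [pow_add]
          norm_num
        have key2 : (2 : ℤ) ^ (k - 2) ∣ b * (b + 1) := by
          have he : (a - 1) * (a + 1) = (b * (b + 1)) * 4 := by rw [hb]; ring
          rw [he, hpow4] at key
          exact (mul_dvd_mul_iff_right (by norm_num : (4 : ℤ) ≠ 0)).mp key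
        have hpw1 : (2 : ℤ) ^ (k - 1) = 2 ^ (k - 2) * 2 := by
          rw [show k - 1 = k - 2 + 1 by omega, pow_succ]
        have hpwk : (2 : ℤ) ^ k = 2 ^ (k - 1) * 2 := by
          rw [← pow_succ, show k - 1 + 1 = k by omega]
        have tcast : (((2 : ℤ) ^ (k - 1) : ℤ) : ZMod (2 ^ k)) = t := by
          push_cast
          rw [htdef]
        rcases Int.even_or_odd b with ⟨c, hc⟩ | ⟨c, hc⟩
        · -- b even, b+1 odd, 2^(k-2) ∣ b, x ≡ 1 mod 2^(k-1)
          have hodd : ¬ (2 : ℤ) ∣ (b + 1) := by omega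
          have hcop : IsCoprime ((2 : ℤ) ^ (k - 2)) (b + 1) :=
            (Int.prime_two.coprime_iff_not_dvd.mpr hodd).pow_left
          obtain ⟨m, hm⟩ := hcop.dvd_of_dvd_mul_right key2
          have ham : a - 1 = 2 ^ (k - 1) * m := by rw [hb, hm, hpw1]; ring
          rcases Int.even_or_odd m with ⟨q, hq⟩ | ⟨q, hq⟩
          · left
            have h0 : ((a - 1 : ℤ) : ZMod (2 ^ k)) = 0 := by
              have : a - 1 = 2 ^ k * q := by rw [ham, hq, hpwk]; ring
              rw [this]
              push_cast
              rw [h2k, zero_mul]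
            push_cast at h0
            rw [hx] at h0
            exact sub_eq_zero.mp h0
          · right; right; left
            have h0 : ((a - 1 : ℤ) : ZMod (2 ^ k)) = t := by
              have : a - 1 = 2 ^ k * q + 2 ^ (k - 1) := by rw [ham, hq, hpwk]; ring
              rw [this]
              push_cast
              rw [h2k, zero_mul, zero_add, htdef]
            push_cast at h0
            rw [hx] at h0
            linear_combination h0
        · -- b odd, 2^(k-2) ∣ b+1, x ≡ -1 mod 2^(k-1)
          have hodd : ¬ (2 : ℤ) ∣ b := by omega
          have hcop : IsCoprime ((2 : ℤ) ^ (k - 2)) b :=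
            (Int.prime_two.coprime_iff_not_dvd.mpr hodd).pow_left
          obtain ⟨m, hm⟩ := hcop.dvd_of_dvd_mul_left key2
          have ham : a + 1 = 2 ^ (k - 1) * m := by
            rw [hpw1]
            linear_combination hb + 2 * hm
          rcases Int.even_or_odd m with ⟨q, hq⟩ | ⟨q, hq⟩
          · right; left
            have h0 : ((a + 1 : ℤ) : ZMod (2 ^ k)) = 0 := by
              have : a + 1 = 2 ^ k * q := by rw [ham, hq, hpwk]; ring
              rw [this]
              push_cast
              rw [h2k, zero_mul]
            push_cast at h0
            rw [hx] at h0
            exact eq_neg_of_add_eq_zero_left h0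
          · right; right; right
            have h0 : ((a + 1 : ℤ) : ZMod (2 ^ k)) = t := by
              have : a + 1 = 2 ^ k * q + 2 ^ (k - 1) := by rw [ham, hq, hpwk]; ring
              rw [this]
              push_cast
              rw [h2k, zero_mul, zero_add, htdef]
            push_cast at h0
            rw [hx] at h0
            linear_combination h0
    · rintro (rfl | rfl | rfl | rfl)
      · rw [one_pow]
      · rw [neg_one_sq]
      · linear_combination htt + ht2
      · linear_combination htt - ht2
  -- distinctness
  have tcast : (((2 : ℤ) ^ (k - 1) : ℤ) : ZMod (2 ^ k)) = t := by
    push_cast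
    rw [htdef]
  have d1 : (1 : ZMod (2 ^ k)) ≠ -1 := by
    intro he
    exact notdvd 2 (by norm_num) (by omega) (hcast 2 (by push_cast; linear_combination he))
  have d2 : (1 : ZMod (2 ^ k)) ≠ t + 1 := by
    intro he
    refine notdvd (2 ^ (k - 1)) (by omega) (by omega) (hcast _ ?_)
    rw [tcast]
    linear_combination -he
  have d3 : (1 : ZMod (2 ^ k)) ≠ t - 1 := by
    intro he
    refine notdvd (2 ^ (k - 1) - 2) (by omega) (by omega) (hcast _ ?_)
    push_cast
    rw [← htdef]
    linear_combination -he
  have d4 : (-1 : ZMod (2 ^ k)) ≠ t + 1 := by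
    intro he
    refine notdvd (2 ^ (k - 1) + 2) (by omega) (by omega) (hcast _ ?_)
    push_cast
    rw [← htdef]
    linear_combination -he
  have d5 : (-1 : ZMod (2 ^ k)) ≠ t - 1 := by
    intro he
    refine notdvd (2 ^ (k - 1)) (by omega) (by omega) (hcast _ ?_)
    rw [tcast]
    linear_combination -he
  have d6 : (t + 1 : ZMod (2 ^ k)) ≠ t - 1 := by
    intro he
    exact notdvd 2 (by norm_num) (by omega) (hcast 2 (by push_cast; linear_combination he))
  have hcard : Nat.card {x : ZMod (2 ^ k) // x ^ 2 = 1}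
      = ({1, -1, t + 1, t - 1} : Set (ZMod (2 ^ k))).ncard := by
    rw [← hset]
    exact Nat.card_coe_set_eq _
  rw [hcard]
  rw [Set.ncard_insert_of_notMem (by simp [d1, d2, d3]),
    Set.ncard_insert_of_notMem (by simp [d4, d5]),
    Set.ncard_pair d6]

lemma c1_mul {a b : ℕ} (ha : a ≠ 0) (hb : b ≠ 0) (hab : a.Coprime b) :
    c1 (a * b) = c1 a + c1 b := by
  have hf : (a * b).factorization 2 = a.factorization 2 + b.factorization 2 := by
    rw [Nat.factorization_mul ha hb]; rfl
  have h0 : a.factorization 2 = 0 ∨ b.factorization 2 = 0 := by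
    by_contra hc
    push_neg at hc
    have h2a : 2 ∣ a := Nat.dvd_of_factorization_pos hc.1
    have h2b : 2 ∣ b := Nat.dvd_of_factorization_pos hc.2
    have h1 : (2 : ℕ) ∣ 1 := hab ▸ Nat.dvd_gcd h2a h2b
    omega
  unfold c1
  rcases h0 with hz | hz <;> rw [hf, hz] <;> split_ifs <;> omega

lemma sq1_mul {a b : ℕ} (hab : a.Coprime b) :
    Nat.card {x : ZMod (a * b) // x ^ 2 = 1}
      = Nat.card {x : ZMod a // x ^ 2 = 1} * Nat.card {y : ZMod b // y ^ 2 = 1} := by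
  rw [card_sq1_congr (ZMod.chineseRemainder hab).toMulEquiv, card_sq1_prod]

lemma sq1_card : ∀ N : ℕ, 0 < N →
    ((Nat.card {x : ZMod N // x ^ 2 = 1} : ℝ) = 2 ^ ((N.primeFactors.card : ℤ) - c1 N)) := by
  intro N
  induction N using Nat.recOnPosPrimePosCoprime with
  | prime_pow p k pp hk =>
    intro _
    have pp' : p.Prime := pp
    have hk' : k ≠ 0 := hk.ne'
    have hω : ((p ^ k).primeFactors.card : ℤ) = 1 := by
      rw [Nat.primeFactors_pow _ hk', pp'.primeFactors]
      simp
    have hfact : (p ^ k).factorization 2 = if p = 2 then k else 0 := by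
      rw [pp'.factorization_pow, Finsupp.single_apply]
    by_cases hp2 : p = 2
    · subst hp2
      have hfact2 : ((2:ℕ) ^ k).factorization 2 = k := by rw [hfact]; simp
      have hc : c1 (2 ^ k) = if k = 0 ∨ k = 2 then 0 else if k = 1 then 1 else -1 := by
        unfold c1
        rw [hfact2]
      by_cases hk1 : k = 1
      · subst hk1
        rw [hω, hc, pow_one, sq1_two]
        norm_num
      · by_cases hk2 : k = 2
        · subst hk2
          rw [hω, hc, show (2:ℕ) ^ 2 = 4 by norm_num, sq1_four]
          norm_num
        · have hk3 : 3 ≤ k := by omega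
          rw [sq1_two_pow_big hk3, hω, hc]
          simp only [hk1, hk2, hk']
          norm_num
    · rw [sq1_odd_prime_pow pp' hp2 hk', hω]
      have hc : c1 (p ^ k) = 0 := by
        unfold c1
        rw [hfact]
        simp [hp2]
      rw [hc]
      norm_num
  | zero => intro h; exact absurd h (lt_irrefl 0)
  | one =>
    intro _
    have h1 : Nat.card {x : ZMod 1 // x ^ 2 = 1} = 1 := by
      rw [Nat.card_eq_fintype_card]; decide
    have hc : c1 1 = 0 := by unfold c1; simp
    rw [h1, hc]
    simp
  | coprime a b ha hb hab iha ihb =>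
    intro _
    rw [sq1_mul hab]
    push_cast
    rw [iha (by omega), ihb (by omega), c1_mul (by omega) (by omega) hab,
      Nat.Coprime.primeFactors_mul hab,
      Finset.card_union_of_disjoint (Nat.Coprime.disjoint_primeFactors hab),
      ← zpow_add₀ (by norm_num : (2:ℝ) ≠ 0)]
    congr 1
    push_cast
    ring

/-- For a positive integer `N`, the quotient of `(ℤ/Nℤ)ˣ` by its subgroup of
squares has cardinality `2 ^ (ω(N) - c₁(N))`. -/
theorem card_units_zmod_quotient_squares (N : ℕ) (hN : 0 < N) :
    (Nat.card ((ZMod N)ˣ ⧸ (powMonoidHom 2 : (ZMod N)ˣ →* (ZMod N)ˣ).range) : ℝ)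
      = 2 ^ ((N.primeFactors.card : ℤ) - c1 N) := by
  haveI : NeZero N := ⟨hN.ne'⟩
  rw [card_quot_range, card_ker_sq]
  exact sq1_card N hN
end

section
/- Let M ⊆ ℂ be a finite Galois extension of ℚ whose Galois group Gal(M/ℚ) is a generalized dihedral group. Let N be a positive integer and λ ∈ ℂ a primitive N-th root of unity. Then [M ∩ ℚ(λ) : ℚ] ≤ 2^{ω(N) − c₁(N)}. -/
open IntermediateField

set_option maxHeartbeats 1000000
set_option synthInstance.maxHeartbeats 400000


noncomputable def sqc (n : ℕ) : ℕ := Nat.card {x : ZMod n // x ^ 2 = 1}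

lemma zmod_dvd_of_sq_eq_one {m : ℕ} [NeZero m] {x : ZMod m} (hx : x ^ 2 = 1) :
    (m : ℤ) ∣ ((x.val : ℤ) - 1) * ((x.val : ℤ) + 1) := by
  rw [← ZMod.intCast_zmod_eq_zero_iff_dvd]
  push_cast
  rw [ZMod.natCast_val, ZMod.cast_id]
  linear_combination hx

lemma int_cast_eq_of_dvd {m : ℕ} {a b : ℤ} (h : (m : ℤ) ∣ a - b) :
    ((a : ZMod m)) = (b : ZMod m) := by
  have := (ZMod.intCast_zmod_eq_zero_iff_dvd (a - b) m).2 h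
  push_cast at this
  linear_combination this

lemma zmod_self_cast_val {m : ℕ} [NeZero m] (x : ZMod m) : ((x.val : ℤ) : ZMod m) = x := by
  push_cast
  rw [ZMod.natCast_val, ZMod.cast_id]

lemma sq_eq_one_cases_odd {p k : ℕ} (hp : p.Prime) (hp2 : p ≠ 2) {x : ZMod (p ^ k)}
    (hx : x ^ 2 = 1) : x = 1 ∨ x = -1 := by
  haveI : NeZero (p ^ k) := ⟨(pow_pos hp.pos k).ne'⟩
  set a : ℤ := (x.val : ℤ) with ha
  have hdvd : ((p : ℤ) ^ k) ∣ (a - 1) * (a + 1) := by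
    have := zmod_dvd_of_sq_eq_one hx
    push_cast at this ⊢
    exact this
  have hpZ : Prime (p : ℤ) := Nat.prime_iff_prime_int.mp hp
  have hnot : ¬ ((p : ℤ) ∣ a - 1) ∨ ¬ ((p : ℤ) ∣ a + 1) := by
    by_contra hcon
    push_neg at hcon
    have h2 : (p : ℤ) ∣ 2 := by
      have := dvd_sub hcon.2 hcon.1
      simpa using this
    have hple := Int.le_of_dvd (by norm_num) h2
    have : p ≤ 2 := by exact_mod_cast hple
    have := hp.two_le
    omega
  rcases hnot with hnd | hnd
  · right
    have hco : IsCoprime ((p : ℤ) ^ k) (a - 1) :=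
      ((hpZ.coprime_iff_not_dvd).2 hnd).pow_left
    have : ((p : ℤ) ^ k) ∣ a + 1 := hco.dvd_of_dvd_mul_right (by rwa [mul_comm] at hdvd)
    have h0 : ((a + 1 : ℤ) : ZMod (p ^ k)) = 0 := by
      rw [ZMod.intCast_zmod_eq_zero_iff_dvd]
      push_cast
      exact this
    push_cast at h0
    rw [zmod_self_cast_val] at h0
    linear_combination h0
  · left
    have hco : IsCoprime ((p : ℤ) ^ k) (a + 1) :=
      ((hpZ.coprime_iff_not_dvd).2 hnd).pow_left
    have : ((p : ℤ) ^ k) ∣ a - 1 := hco.dvd_of_dvd_mul_right hdvd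
    have h0 : ((a - 1 : ℤ) : ZMod (p ^ k)) = 0 := by
      rw [ZMod.intCast_zmod_eq_zero_iff_dvd]
      push_cast
      exact this
    push_cast at h0
    rw [zmod_self_cast_val] at h0
    linear_combination h0

lemma two_pow_sub_one_dvd {k : ℕ} (hk : 1 ≤ k) {a : ℤ}
    (hdvd : (2 : ℤ) ^ k ∣ (a - 1) * (a + 1)) :
    (2 : ℤ) ^ (k - 1) ∣ a - 1 ∨ (2 : ℤ) ^ (k - 1) ∣ a + 1 := by
  have hpow : (2 : ℤ) * 2 ^ (k - 1) = (2 : ℤ) ^ k := by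
    rw [← pow_succ']
    congr 1
    omega
  have hp2 : Prime (2 : ℤ) := Int.prime_two
  have h2 : (2 : ℤ) ∣ (a - 1) * (a + 1) := dvd_trans (dvd_pow_self 2 (by omega)) hdvd
  have he : (2 : ℤ) ∣ a - 1 ∧ (2 : ℤ) ∣ a + 1 := by
    rcases hp2.dvd_mul.mp h2 with h | h
    · exact ⟨h, by omega⟩
    · exact ⟨by omega, h⟩
  by_cases h4 : (4 : ℤ) ∣ a - 1
  · left
    obtain ⟨c, hc⟩ := he.2
    have hcodd : ¬ (2 : ℤ) ∣ c := by
      intro ⟨d, hd⟩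
      omega
    have hdvd' : (2 : ℤ) * 2 ^ (k - 1) ∣ 2 * ((a - 1) * c) := by
      rw [hpow]
      calc (2:ℤ)^k ∣ (a - 1) * (a + 1) := hdvd
        _ = 2 * ((a - 1) * c) := by rw [hc]; ring
    have hdvd'' : (2 : ℤ) ^ (k - 1) ∣ (a - 1) * c :=
      (mul_dvd_mul_iff_left (by norm_num : (2:ℤ) ≠ 0)).mp hdvd'
    have hco : IsCoprime ((2 : ℤ) ^ (k - 1)) c :=
      ((hp2.coprime_iff_not_dvd).2 hcodd).pow_left
    exact hco.dvd_of_dvd_mul_right hdvd''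
  · right
    obtain ⟨b, hb⟩ := he.1
    have hbodd : ¬ (2 : ℤ) ∣ b := by
      intro ⟨d, hd⟩
      exact h4 ⟨d, by omega⟩
    have hdvd' : (2 : ℤ) * 2 ^ (k - 1) ∣ 2 * (b * (a + 1)) := by
      rw [hpow]
      calc (2:ℤ)^k ∣ (a - 1) * (a + 1) := hdvd
        _ = 2 * (b * (a + 1)) := by rw [hb]; ring
    have hdvd'' : (2 : ℤ) ^ (k - 1) ∣ b * (a + 1) :=
      (mul_dvd_mul_iff_left (by norm_num : (2:ℤ) ≠ 0)).mp hdvd'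
    have hco : IsCoprime ((2 : ℤ) ^ (k - 1)) b :=
      ((hp2.coprime_iff_not_dvd).2 hbodd).pow_left
    exact hco.dvd_of_dvd_mul_left hdvd''

lemma eq_of_dvd_sub_pow {k : ℕ} (hk : 1 ≤ k) {x : ZMod (2 ^ k)} {r : ℤ}
    (h : (2 : ℤ) ^ (k - 1) ∣ ((x.val : ℤ) - r)) :
    x = (r : ZMod (2 ^ k)) ∨ x = (r : ZMod (2 ^ k)) + (2 : ZMod (2 ^ k)) ^ (k - 1) := by
  haveI : NeZero (2 ^ k) := ⟨(pow_pos (by norm_num) k).ne'⟩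
  obtain ⟨t, ht⟩ := h
  have hpow : (2 : ℤ) ^ (k - 1) * 2 = (2 : ℤ) ^ k := by
    rw [← pow_succ]
    congr 1
    omega
  rcases Int.even_or_odd t with ⟨u, hu⟩ | ⟨u, hu⟩
  · left
    have hdvd : ((2 ^ k : ℕ) : ℤ) ∣ (x.val : ℤ) - r := by
      refine ⟨u, ?_⟩
      push_cast
      rw [ht, hu, ← hpow]
      ring
    have := int_cast_eq_of_dvd hdvd
    rwa [zmod_self_cast_val] at this
  · right
    have hdvd : ((2 ^ k : ℕ) : ℤ) ∣ (x.val : ℤ) - (r + 2 ^ (k - 1)) := by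
      refine ⟨u, ?_⟩
      push_cast
      have h2 : (x.val : ℤ) - r = 2 ^ (k - 1) * (2 * u + 1) := by rw [ht, hu]
      linear_combination h2 + u * hpow
    have := int_cast_eq_of_dvd hdvd
    rw [zmod_self_cast_val] at this
    rw [this]
    push_cast
    ring

lemma sq_eq_one_cases_two_pow {k : ℕ} (hk : 1 ≤ k) {x : ZMod (2 ^ k)}
    (hx : x ^ 2 = 1) :
    x = 1 ∨ x = 1 + (2 : ZMod (2 ^ k)) ^ (k - 1) ∨ x = -1 ∨
      x = -1 + (2 : ZMod (2 ^ k)) ^ (k - 1) := by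
  haveI : NeZero (2 ^ k) := ⟨(pow_pos (by norm_num) k).ne'⟩
  have hdvd : (2 : ℤ) ^ k ∣ ((x.val : ℤ) - 1) * ((x.val : ℤ) + 1) := by
    have := zmod_dvd_of_sq_eq_one hx
    push_cast at this ⊢
    exact this
  rcases two_pow_sub_one_dvd hk hdvd with h | h
  · rcases eq_of_dvd_sub_pow hk (r := 1) (by push_cast; exact h) with h' | h'
    · left; simpa using h'
    · right; left; rw [h']; push_cast; ring
  · rcases eq_of_dvd_sub_pow hk (r := -1) (by simpa using h) with h' | h'
    · right; right; left; rw [h']; push_cast; ring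
    · right; right; right; rw [h']; push_cast; ring

-- cardinality helpers
lemma sqc_le_of_subset {m : ℕ} {s : Set (ZMod m)} (hs : ∀ x : ZMod m, x ^ 2 = 1 → x ∈ s)
    (hfin : s.Finite) : sqc m ≤ s.ncard := by
  have h1 : sqc m = ({x : ZMod m | x ^ 2 = 1} : Set _).ncard := (Nat.card_coe_set_eq _)
  rw [h1]
  exact Set.ncard_le_ncard hs hfin

lemma sqc_le_one {m : ℕ} (h : ∀ x : ZMod m, x ^ 2 = 1 → x = 1) : sqc m ≤ 1 := by
  have := sqc_le_of_subset (s := {1}) (fun x hx => h x hx) (Set.finite_singleton _)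
  simpa using this

lemma sqc_le_two {m : ℕ} {a b : ZMod m} (h : ∀ x : ZMod m, x ^ 2 = 1 → x = a ∨ x = b) :
    sqc m ≤ 2 := by
  have := sqc_le_of_subset (s := {a, b}) (fun x hx => h x hx) (Set.toFinite _)
  calc sqc m ≤ ({a, b} : Set (ZMod m)).ncard := this
    _ ≤ ({b} : Set (ZMod m)).ncard + 1 := Set.ncard_insert_le _ _
    _ ≤ 2 := by rw [Set.ncard_singleton]

lemma sqc_le_four {m : ℕ} {a b c d : ZMod m}
    (h : ∀ x : ZMod m, x ^ 2 = 1 → x = a ∨ x = b ∨ x = c ∨ x = d) : sqc m ≤ 4 := by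
  have := sqc_le_of_subset (s := {a, b, c, d}) (fun x hx => h x hx) (Set.toFinite _)
  calc sqc m ≤ ({a, b, c, d} : Set (ZMod m)).ncard := this
    _ ≤ ({b, c, d} : Set (ZMod m)).ncard + 1 := Set.ncard_insert_le _ _
    _ ≤ (({c, d} : Set (ZMod m)).ncard + 1) + 1 :=
        Nat.add_le_add_right (Set.ncard_insert_le _ _) 1
    _ ≤ ((({d} : Set (ZMod m)).ncard + 1) + 1) + 1 :=
        Nat.add_le_add_right (Nat.add_le_add_right (Set.ncard_insert_le _ _) 1) 1
    _ ≤ 4 := by rw [Set.ncard_singleton]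

lemma sqc_mul {m n : ℕ} (h : Nat.Coprime m n) : sqc (m * n) = sqc m * sqc n := by
  set c := ZMod.chineseRemainder h with hc
  have key : ∀ x : ZMod (m * n), x ^ 2 = 1 ↔ (c x) ^ 2 = 1 := by
    intro x
    constructor
    · intro hx; rw [← map_pow, hx, map_one]
    · intro hx
      have := congrArg c.symm hx
      simpa [← map_pow, map_one] using this
  have e1 : {x : ZMod (m*n) // x ^ 2 = 1} ≃ {y : ZMod m × ZMod n // y ^ 2 = 1} :=
    c.toEquiv.subtypeEquiv (fun x => key x)
  have e2 : {y : ZMod m × ZMod n // y ^ 2 = 1} ≃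
      {a : ZMod m // a ^ 2 = 1} × {b : ZMod n // b ^ 2 = 1} :=
    { toFun := fun y => (⟨y.1.1, congrArg Prod.fst y.2⟩, ⟨y.1.2, congrArg Prod.snd y.2⟩)
      invFun := fun p => ⟨(p.1.1, p.2.1), Prod.ext p.1.2 p.2.2⟩
      left_inv := fun y => by ext <;> rfl
      right_inv := fun p => by ext <;> rfl }
  rw [sqc, Nat.card_congr (e1.trans e2), Nat.card_prod]
  rfl

lemma sqc_odd : ∀ n : ℕ, 0 < n → ¬ 2 ∣ n → sqc n ≤ 2 ^ n.primeFactors.card := by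
  intro n
  induction n using Nat.recOnPosPrimePosCoprime with
  | prime_pow p k hp hk =>
      intro _ h2
      have hp2 : p ≠ 2 := by
        rintro rfl
        exact h2 (dvd_pow_self 2 hk.ne')
      have hb : sqc (p ^ k) ≤ 2 := sqc_le_two (fun x hx => sq_eq_one_cases_odd hp hp2 hx)
      calc sqc (p ^ k) ≤ 2 := hb
        _ ≤ 2 ^ (p ^ k).primeFactors.card := by
            rw [Nat.primeFactors_prime_pow hk.ne' hp]
            simp
  | zero => intro h; omega
  | one =>
      intro _ _
      have : sqc 1 ≤ 1 := sqc_le_one (fun x _ => Subsingleton.elim x 1)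
      simpa using this
  | coprime a b ha hb hab iha ihb =>
      intro hpos h2
      have ha0 : 0 < a := by omega
      have hb0 : 0 < b := by omega
      have h2a : ¬ 2 ∣ a := fun h => h2 (h.mul_right b)
      have h2b : ¬ 2 ∣ b := fun h => h2 (h.mul_left a)
      rw [sqc_mul hab, Nat.Coprime.primeFactors_mul hab,
        Finset.card_union_of_disjoint (Nat.Coprime.disjoint_primeFactors hab), pow_add]
      exact Nat.mul_le_mul (iha ha0 h2a) (ihb hb0 h2b)

lemma sqc_two_pow_le : ∀ k : ℕ, (k = 0 ∨ k = 1 → sqc (2 ^ k) ≤ 1) ∧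
    (k = 2 → sqc (2 ^ k) ≤ 2) ∧ (3 ≤ k → sqc (2 ^ k) ≤ 4) := by
  intro k
  refine ⟨?_, ?_, ?_⟩
  · rintro (rfl | rfl)
    · exact sqc_le_one (by decide)
    · exact sqc_le_one (by decide)
  · rintro rfl
    exact sqc_le_two (a := 1) (b := -1) (by decide)
  · intro hk
    exact sqc_le_four (fun x hx => sq_eq_one_cases_two_pow (by omega) hx)

lemma sqc_bound {N : ℕ} (hN : 0 < N) :
    ∃ e : ℕ, sqc N ≤ 2 ^ e ∧ (e : ℤ) = (N.primeFactors.card : ℤ) - c1 N := by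
  set k := N.factorization 2 with hk
  set m := ordCompl[2] N with hm
  have hNfac : 2 ^ k * m = N := Nat.ordProj_mul_ordCompl_eq_self N 2
  have hm0 : 0 < m := Nat.ordCompl_pos 2 hN.ne'
  have hmodd : ¬ 2 ∣ m := Nat.not_dvd_ordCompl Nat.prime_two hN.ne'
  have hco : Nat.Coprime (2 ^ k) m :=
    Nat.Coprime.pow_left _ (Nat.coprime_ordCompl Nat.prime_two hN.ne')
  have hsqcN : sqc N = sqc (2 ^ k) * sqc m := by
    conv_lhs => rw [← hNfac]
    exact sqc_mul hco
  have hmbound : sqc m ≤ 2 ^ m.primeFactors.card := sqc_odd m hm0 hmodd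
  have hωpos : k ≠ 0 → N.primeFactors.card = m.primeFactors.card + 1 := by
    intro hk0
    have h2m : 2 ∉ m.primeFactors := by
      intro h
      exact hmodd (Nat.dvd_of_mem_primeFactors h)
    conv_lhs => rw [← hNfac]
    rw [Nat.Coprime.primeFactors_mul hco, Nat.primeFactors_prime_pow hk0 Nat.prime_two]
    rw [show ({2} ∪ m.primeFactors : Finset ℕ) = insert 2 m.primeFactors from rfl,
      Finset.card_insert_of_notMem h2m]
  obtain hk0 | hk1 | hk2 | hk3 : k = 0 ∨ k = 1 ∨ k = 2 ∨ 3 ≤ k := by omega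
  · refine ⟨N.primeFactors.card, ?_, ?_⟩
    · have hω0 : N.primeFactors.card = m.primeFactors.card := by
        conv_lhs => rw [← hNfac, hk0]
        simp
      have h1 : sqc (2 ^ k) ≤ 1 := (sqc_two_pow_le k).1 (Or.inl hk0)
      calc sqc N = sqc (2 ^ k) * sqc m := hsqcN
        _ ≤ 1 * 2 ^ m.primeFactors.card := Nat.mul_le_mul h1 hmbound
        _ = 2 ^ N.primeFactors.card := by rw [one_mul, hω0]
    · have : c1 N = 0 := by simp [c1, ← hk, hk0]
      rw [this]; ring
  · refine ⟨m.primeFactors.card, ?_, ?_⟩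
    · have h1 : sqc (2 ^ k) ≤ 1 := (sqc_two_pow_le k).1 (Or.inr hk1)
      calc sqc N = sqc (2 ^ k) * sqc m := hsqcN
        _ ≤ 1 * 2 ^ m.primeFactors.card := Nat.mul_le_mul h1 hmbound
        _ = 2 ^ m.primeFactors.card := one_mul _
    · have hc : c1 N = 1 := by simp [c1, ← hk, hk1]
      rw [hc, hωpos (by omega)]
      push_cast
      ring
  · refine ⟨m.primeFactors.card + 1, ?_, ?_⟩
    · have h1 : sqc (2 ^ k) ≤ 2 := (sqc_two_pow_le k).2.1 hk2
      calc sqc N = sqc (2 ^ k) * sqc m := hsqcN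
        _ ≤ 2 * 2 ^ m.primeFactors.card := Nat.mul_le_mul h1 hmbound
        _ = 2 ^ (m.primeFactors.card + 1) := by ring
    · have hc : c1 N = 0 := by simp [c1, ← hk, hk2]
      rw [hc, hωpos (by omega)]
      push_cast
      ring
  · refine ⟨m.primeFactors.card + 2, ?_, ?_⟩
    · have h1 : sqc (2 ^ k) ≤ 4 := (sqc_two_pow_le k).2.2 hk3
      calc sqc N = sqc (2 ^ k) * sqc m := hsqcN
        _ ≤ 4 * 2 ^ m.primeFactors.card := Nat.mul_le_mul h1 hmbound
        _ = 2 ^ (m.primeFactors.card + 2) := by ring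
    · have hc : c1 N = -1 := by
        have h0 : ¬ (N.factorization 2 = 0 ∨ N.factorization 2 = 2) := by omega
        have h1 : ¬ N.factorization 2 = 1 := by omega
        simp [c1, h0, h1]
      rw [hc, hωpos (by omega)]
      push_cast
      ring


/-- quotients of a generalized dihedral group that are commutative have exponent 2 -/
lemma gen_dihedral_quot_exp_two {H : Type*} [CommGroup H]
    (φ : Multiplicative (ZMod 2) →* MulAut H)
    (hφ : ∀ h : H, φ (Multiplicative.ofAdd (1 : ZMod 2)) h = h⁻¹)
    {Q : Type*} [Group Q] (f : (H ⋊[φ] Multiplicative (ZMod 2)) →* Q)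
    (hf : Function.Surjective f) (hcomm : ∀ a b : Q, a * b = b * a) :
    ∀ q : Q, q ^ 2 = 1 := by
  set t₁ : Multiplicative (ZMod 2) := Multiplicative.ofAdd (1 : ZMod 2) with ht₁
  have ht₁sq : t₁ * t₁ = 1 := by decide
  have key : ∀ h : H, f ⟨h * h, 1⟩ = 1 := by
    intro h
    have h1 : (⟨h, 1⟩ : H ⋊[φ] Multiplicative (ZMod 2)) * ⟨1, t₁⟩ = ⟨h, t₁⟩ := by
      ext <;> simp
    have h2 : (⟨h⁻¹, 1⟩ : H ⋊[φ] Multiplicative (ZMod 2)) * ⟨1, t₁⟩ = ⟨h⁻¹, t₁⟩ := by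
      ext <;> simp
    have h3 : (⟨h, t₁⟩ : H ⋊[φ] Multiplicative (ZMod 2)) * ⟨h⁻¹, t₁⟩ = ⟨h * h, 1⟩ := by
      ext
      · simp [hφ]
      · simp [ht₁sq]
    have h4 : (⟨1, t₁⟩ : H ⋊[φ] Multiplicative (ZMod 2)) * ⟨1, t₁⟩ = 1 := by
      ext
      · simp
      · simp [ht₁sq]
    have h5 : (⟨h, 1⟩ : H ⋊[φ] Multiplicative (ZMod 2)) * ⟨h⁻¹, 1⟩ = 1 := by
      ext <;> simp
    letI : CommGroup Q := { (inferInstance : Group Q) with mul_comm := hcomm }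
    calc f ⟨h * h, 1⟩ = f ((⟨h, 1⟩ * ⟨1, t₁⟩) * (⟨h⁻¹, 1⟩ * ⟨1, t₁⟩)) := by rw [h1, h2, h3]
      _ = (f ⟨h, 1⟩ * f ⟨1, t₁⟩) * (f ⟨h⁻¹, 1⟩ * f ⟨1, t₁⟩) := by
          rw [map_mul, map_mul, map_mul]
      _ = (f ⟨h, 1⟩ * f ⟨h⁻¹, 1⟩) * (f ⟨1, t₁⟩ * f ⟨1, t₁⟩) := mul_mul_mul_comm _ _ _ _
      _ = f (⟨h, 1⟩ * ⟨h⁻¹, 1⟩) * f (⟨1, t₁⟩ * ⟨1, t₁⟩) := by rw [map_mul, map_mul]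
      _ = 1 := by rw [h5, h4]; simp
  intro q
  obtain ⟨⟨h, t⟩, rfl⟩ := hf q
  have ht : t = 1 ∨ t = t₁ := by
    have : ∀ z : ZMod 2, z = 0 ∨ z = 1 := by decide
    rcases this t.toAdd with h | h
    · left
      apply Multiplicative.toAdd.injective
      exact h
    · right
      apply Multiplicative.toAdd.injective
      exact h
  rcases ht with rfl | rfl
  · rw [← map_pow]
    have : (⟨h, 1⟩ : H ⋊[φ] Multiplicative (ZMod 2)) ^ 2 = ⟨h * h, 1⟩ := by
      rw [pow_two]
      ext <;> simp
    rw [this]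
    exact key h
  · rw [← map_pow]
    have : (⟨h, t₁⟩ : H ⋊[φ] Multiplicative (ZMod 2)) ^ 2 = 1 := by
      rw [pow_two]
      ext
      · simp [hφ]
      · simp [ht₁sq]
    rw [this, map_one]

/-- quotient of finite comm group with exponent 2 has card at most #{x | x^2 = 1} -/
lemma card_quot_le_card_sq_one {G : Type*} [CommGroup G] [Finite G] {Q : Type*} [Group Q]
    (f : G →* Q) (hf : Function.Surjective f) (hQ : ∀ q : Q, q ^ 2 = 1) :
    Nat.card Q ≤ Nat.card {x : G // x ^ 2 = 1} := by
  set sq : G →* G := powMonoidHom 2 with hsq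
  have hle : sq.range ≤ f.ker := by
    rintro x ⟨y, rfl⟩
    simp only [MonoidHom.mem_ker]
    show f (y ^ 2) = 1
    rw [map_pow]
    exact hQ (f y)
  have hQcard : Nat.card Q = f.ker.index := by
    rw [Subgroup.index_ker, MonoidHom.range_eq_top.mpr hf]
    exact (Nat.card_congr (Equiv.subtypeUnivEquiv (fun _ => trivial))).symm
  have hdvd : f.ker.index ∣ sq.range.index := Subgroup.index_dvd_of_le hle
  have hri : sq.range.index = Nat.card sq.ker := by
    have h1 : sq.range.index * Nat.card sq.range = Nat.card G := Subgroup.index_mul_card _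
    have h2 : Nat.card sq.ker * Nat.card sq.range = Nat.card G := by
      have := Nat.card_congr (QuotientGroup.quotientKerEquivRange sq).toEquiv
      rw [← this]
      rw [mul_comm]
      exact (Subgroup.card_eq_card_quotient_mul_card_subgroup sq.ker).symm
    have hpos : 0 < Nat.card sq.range := Nat.card_pos
    exact Nat.eq_of_mul_eq_mul_right hpos (h1.trans h2.symm)
  have hker : Nat.card sq.ker = Nat.card {x : G // x ^ 2 = 1} := by
    apply Nat.card_congr
    apply Equiv.subtypeEquivRight
    intro x
    simp [MonoidHom.mem_ker, hsq, powMonoidHom]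
  rw [hQcard]
  calc f.ker.index ≤ sq.range.index := Nat.le_of_dvd (by
        rw [hri]; exact Nat.card_pos) hdvd
    _ = Nat.card {x : G // x ^ 2 = 1} := by rw [hri, hker]

lemma card_sq_one_le_of_injective {G M : Type*} [Group G] [Monoid M] [Finite M]
    (ι : G →* M) (hι : Function.Injective ι) :
    Nat.card {x : G // x ^ 2 = 1} ≤ Nat.card {y : M // y ^ 2 = 1} := by
  apply Nat.card_le_card_of_injective
    (fun x => (⟨ι x.1, by rw [← map_pow, x.2, map_one]⟩ : {y : M // y ^ 2 = 1}))
  intro a b hab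
  exact Subtype.ext (hι (congrArg Subtype.val hab))


section Main
set_option maxHeartbeats 1000000
set_option synthInstance.maxHeartbeats 400000


/-- Let `M ⊆ ℂ` be a finite Galois extension of `ℚ` whose Galois group is a
generalized dihedral group `H ⋊ (ℤ/2ℤ)` (with the nontrivial element of
`ℤ/2ℤ` acting on the abelian group `H` by inversion).  If `λ ∈ ℂ` is a
primitive `N`-th root of unity, then `[M ∩ ℚ(λ) : ℚ] ≤ 2 ^ (ω(N) - c₁(N))`. -/
theorem degree_inf_cyclotomic_le_of_generalized_dihedral
    {H : Type*} [CommGroup H]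
    (φ : Multiplicative (ZMod 2) →* MulAut H)
    (hφ : ∀ h : H, φ (Multiplicative.ofAdd (1 : ZMod 2)) h = h⁻¹)
    (M : IntermediateField ℚ ℂ) [FiniteDimensional ℚ M] [IsGalois ℚ M]
    (e : (M ≃ₐ[ℚ] M) ≃* (H ⋊[φ] Multiplicative (ZMod 2)))
    (N : ℕ) (hN : 0 < N) (lam : ℂ) (hlam : IsPrimitiveRoot lam N) :
    (Module.finrank ℚ (M ⊓ ℚ⟮lam⟯ : IntermediateField ℚ ℂ) : ℝ)
      ≤ 2 ^ ((N.primeFactors.card : ℤ) - c1 N) := by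
  haveI : NeZero N := NeZero.of_pos hN
  let n : ℕ+ := ⟨N, hN⟩
  have hlam' : IsPrimitiveRoot lam ((n : ℕ+) : ℕ) := hlam
  have hint : IsIntegral ℚ lam := (hlam.isIntegral hN).tower_top
  haveI hfdL : FiniteDimensional ℚ ℚ⟮lam⟯ := IntermediateField.adjoin.finiteDimensional hint
  haveI hcyc : IsCyclotomicExtension {(n : ℕ)} ℚ ℚ⟮lam⟯ := by
    have Hts := IntermediateField.adjoin_simple_toSubalgebra_of_isAlgebraic hint.isAlgebraic
    refine IsCyclotomicExtension.equiv _ _ _ (h := ?_) (.refl : ℚ⟮lam⟯.toSubalgebra ≃ₐ[ℚ] _)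
    rw [Hts]
    exact hlam'.adjoin_isCyclotomicExtension ℚ
  haveI hgalL : IsGalois ℚ ℚ⟮lam⟯ := IsCyclotomicExtension.isGalois {(n : ℕ)} ℚ ℚ⟮lam⟯
  set K : IntermediateField ℚ ℂ := M ⊓ ℚ⟮lam⟯ with hK
  have hKL : K ≤ ℚ⟮lam⟯ := inf_le_right
  have hKM : K ≤ M := inf_le_left
  haveI : FiniteDimensional ℚ K :=
    FiniteDimensional.of_injective (IntermediateField.inclusion hKL).toLinearMap
      (IntermediateField.inclusion hKL).injective
  haveI hnK : Normal ℚ K := by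
    rw [hK]
    exact @IntermediateField.normal_inf ℚ ℂ _ _ _ M ℚ⟮lam⟯ (IsGalois.to_normal (self := ‹IsGalois ℚ M›)) hgalL.to_normal
  haveI hgK : IsGalois ℚ K := ⟨⟩
  -- restriction maps
  letI : Algebra K ℚ⟮lam⟯ := (IntermediateField.inclusion hKL).toAlgebra
  letI : IsScalarTower ℚ K ℚ⟮lam⟯ := IsScalarTower.of_algebraMap_eq' rfl
  letI : Algebra K M := (IntermediateField.inclusion hKM).toAlgebra
  letI : IsScalarTower ℚ K M := IsScalarTower.of_algebraMap_eq' rfl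
  let ρL : (ℚ⟮lam⟯ ≃ₐ[ℚ] ℚ⟮lam⟯) →* (K ≃ₐ[ℚ] K) :=
    AlgEquiv.restrictNormalHom (F := ℚ) (K₁ := ℚ⟮lam⟯) K
  have hsurjL : Function.Surjective ρL :=
    AlgEquiv.restrictNormalHom_surjective (F := ℚ) (K₁ := ↥K) (E := ℚ⟮lam⟯)
  let ρM : (M ≃ₐ[ℚ] M) →* (K ≃ₐ[ℚ] K) :=
    AlgEquiv.restrictNormalHom (F := ℚ) (K₁ := M) K
  have hsurjM : Function.Surjective ρM :=
    AlgEquiv.restrictNormalHom_surjective (F := ℚ) (K₁ := ↥K) (E := ↥M)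
  -- commutativity of Gal(L)
  let μ : ℚ⟮lam⟯ := IntermediateField.AdjoinSimple.gen ℚ lam
  have hμ : IsPrimitiveRoot μ ((n : ℕ+) : ℕ) := by
    refine IsPrimitiveRoot.coe_submonoidClass_iff.mp ?_
    exact hlam'
  have hcommL : ∀ a b : (ℚ⟮lam⟯ ≃ₐ[ℚ] ℚ⟮lam⟯), a * b = b * a := fun a b =>
    hμ.autToPow_injective ℚ (by rw [map_mul, map_mul, mul_comm])
  have hcommK : ∀ a b : (K ≃ₐ[ℚ] K), a * b = b * a := by
    intro a b
    obtain ⟨a', rfl⟩ := hsurjL a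
    obtain ⟨b', rfl⟩ := hsurjL b
    rw [← map_mul, ← map_mul, hcommL a' b']
  have hexp : ∀ q : (K ≃ₐ[ℚ] K), q ^ 2 = 1 :=
    gen_dihedral_quot_exp_two φ hφ (ρM.comp e.symm.toMonoidHom)
      (hsurjM.comp e.symm.surjective) hcommK
  letI : CommGroup (ℚ⟮lam⟯ ≃ₐ[ℚ] ℚ⟮lam⟯) :=
    { (inferInstance : Group (ℚ⟮lam⟯ ≃ₐ[ℚ] ℚ⟮lam⟯)) with mul_comm := hcommL }
  have h1 : Nat.card (K ≃ₐ[ℚ] K) ≤ Nat.card {x : (ℚ⟮lam⟯ ≃ₐ[ℚ] ℚ⟮lam⟯) // x ^ 2 = 1} :=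
    card_quot_le_card_sq_one ρL hsurjL hexp
  have h2 : Nat.card {x : (ℚ⟮lam⟯ ≃ₐ[ℚ] ℚ⟮lam⟯) // x ^ 2 = 1}
      ≤ Nat.card {u : (ZMod N)ˣ // u ^ 2 = 1} :=
    card_sq_one_le_of_injective (hμ.autToPow ℚ) (hμ.autToPow_injective ℚ)
  have h3 : Nat.card {u : (ZMod N)ˣ // u ^ 2 = 1} ≤ sqc N :=
    card_sq_one_le_of_injective (Units.coeHom (ZMod N)) Units.val_injective
  have hfr : Module.finrank ℚ K = Nat.card (K ≃ₐ[ℚ] K) := by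
    rw [← IsGalois.card_aut_eq_finrank ℚ K, Nat.card_eq_fintype_card]
  obtain ⟨eexp, hle, heq⟩ := sqc_bound hN
  have hchain : Module.finrank ℚ K ≤ 2 ^ eexp := by
    rw [hfr]
    exact le_trans h1 (le_trans h2 (le_trans h3 hle))
  calc ((Module.finrank ℚ K : ℝ)) ≤ ((2 ^ eexp : ℕ) : ℝ) := by exact_mod_cast hchain
    _ = (2 : ℝ) ^ (eexp : ℤ) := by
        rw [zpow_natCast]
        push_cast
        ring
    _ = 2 ^ ((N.primeFactors.card : ℤ) - c1 N) := by rw [heq]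
end Main
end

section
/- Let n be a positive integer and let a ≥ 8 be a real number. If φ(n)/2^{ω(n)} ≤ a, then n < a^{1 + 2/log log a}. -/
open Real Finset

/-- basic sandwich: `log y ≤ log c + y/c - 1` for positive `y, c`. -/
lemma log_le_aux {y c : ℝ} (hy : 0 < y) (hc : 0 < c) :
    Real.log y ≤ Real.log c + y / c - 1 := by
  have h := Real.log_le_sub_one_of_pos (show 0 < y / c by positivity)
  rw [Real.log_div (ne_of_gt hy) (ne_of_gt hc)] at h
  linarith

lemma aux_le_log {y c : ℝ} (hy : 0 < y) (hc : 0 < c) :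
    Real.log c + 1 - c / y ≤ Real.log y := by
  have h := log_le_aux hc hy
  linarith

lemma log_ratio_bounds {r : ℝ} (hr : 1 ≤ r) :
    1 - 1/r ≤ Real.log r ∧ Real.log r ≤ r - 1 := by
  have h1 := log_le_aux (show (0:ℝ) < r by linarith) (show (0:ℝ) < 1 by norm_num)
  have h2 := aux_le_log (show (0:ℝ) < r by linarith) (show (0:ℝ) < 1 by norm_num)
  rw [Real.log_one] at h1 h2
  constructor <;> [linarith [h2]; linarith [h1]]

lemma log3_bounds : 1.0986046 < Real.log 3 ∧ Real.log 3 < 1.0986200 := by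
  have h12 : Real.log 531441 = 12 * Real.log 3 := by
    rw [show (531441:ℝ) = 3 ^ 12 by norm_num, Real.log_pow]; norm_num
  have h19 : Real.log 531441 = 19 * Real.log 2 + Real.log (531441 / 524288) := by
    rw [show (531441:ℝ) = 2 ^ 19 * (531441 / 524288) by norm_num,
      Real.log_mul (by positivity) (by norm_num), Real.log_pow]
    norm_num
  obtain ⟨hl, hu⟩ := log_ratio_bounds (show (1:ℝ) ≤ 531441/524288 by norm_num)
  norm_num at hl hu
  have l2l := Real.log_two_gt_d9
  have l2u := Real.log_two_lt_d9
  constructor <;> linarith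

lemma log5_bounds : 1.6093434 < Real.log 5 ∧ Real.log 5 < 1.6095310 := by
  have h3 : Real.log 125 = 3 * Real.log 5 := by
    rw [show (125:ℝ) = 5 ^ 3 by norm_num, Real.log_pow]; norm_num
  have h7 : Real.log 125 = 7 * Real.log 2 - Real.log (128 / 125) := by
    rw [show (125:ℝ) = 2 ^ 7 / (128 / 125) by norm_num,
      Real.log_div (by positivity) (by norm_num), Real.log_pow]
    norm_num
  obtain ⟨hl, hu⟩ := log_ratio_bounds (show (1:ℝ) ≤ 128/125 by norm_num)
  norm_num at hl hu
  have l2l := Real.log_two_gt_d9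
  have l2u := Real.log_two_lt_d9
  constructor <;> linarith

lemma log7_bounds : 1.9458004 < Real.log 7 ∧ Real.log 7 < 1.9460211 := by
  have h2 : Real.log 49 = 2 * Real.log 7 := by
    rw [show (49:ℝ) = 7 ^ 2 by norm_num, Real.log_pow]; norm_num
  have h48 : Real.log 49 = 4 * Real.log 2 + Real.log 3 + Real.log (49 / 48) := by
    rw [show (49:ℝ) = 2 ^ 4 * 3 * (49 / 48) by norm_num,
      Real.log_mul (by positivity) (by norm_num), Real.log_mul (by positivity) (by norm_num),
      Real.log_pow]
    norm_num
  obtain ⟨hl, hu⟩ := log_ratio_bounds (show (1:ℝ) ≤ 49/48 by norm_num)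
  norm_num at hl hu
  have l2l := Real.log_two_gt_d9
  have l2u := Real.log_two_lt_d9
  have l3 := log3_bounds
  constructor <;> linarith [l3.1, l3.2]

lemma log11_bounds : 2.3978269 < Real.log 11 ∧ Real.log 11 < 2.3979630 := by
  have h2 : Real.log 121 = 2 * Real.log 11 := by
    rw [show (121:ℝ) = 11 ^ 2 by norm_num, Real.log_pow]; norm_num
  have h120 : Real.log 121 = 3 * Real.log 2 + Real.log 3 + Real.log 5 + Real.log (121 / 120) := by
    rw [show (121:ℝ) = 2 ^ 3 * 3 * 5 * (121 / 120) by norm_num,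
      Real.log_mul (by positivity) (by norm_num), Real.log_mul (by positivity) (by norm_num),
      Real.log_mul (by positivity) (by norm_num), Real.log_pow]
    norm_num
  obtain ⟨hl, hu⟩ := log_ratio_bounds (show (1:ℝ) ≤ 121/120 by norm_num)
  norm_num at hl hu
  have l2l := Real.log_two_gt_d9
  have l2u := Real.log_two_lt_d9
  have l3 := log3_bounds
  have l5 := log5_bounds
  constructor <;> linarith [l3.1, l3.2, l5.1, l5.2]

lemma log13_bounds : 2.5648817 < Real.log 13 ∧ Real.log 13 < 2.5650177 := by
  have h2 : Real.log 169 = 2 * Real.log 13 := by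
    rw [show (169:ℝ) = 13 ^ 2 by norm_num, Real.log_pow]; norm_num
  have h168 : Real.log 169 = 3 * Real.log 2 + Real.log 3 + Real.log 7 + Real.log (169 / 168) := by
    rw [show (169:ℝ) = 2 ^ 3 * 3 * 7 * (169 / 168) by norm_num,
      Real.log_mul (by positivity) (by norm_num), Real.log_mul (by positivity) (by norm_num),
      Real.log_mul (by positivity) (by norm_num), Real.log_pow]
    norm_num
  obtain ⟨hl, hu⟩ := log_ratio_bounds (show (1:ℝ) ≤ 169/168 by norm_num)
  norm_num at hl hu
  have l2l := Real.log_two_gt_d9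
  have l2u := Real.log_two_lt_d9
  have l3 := log3_bounds
  have l7 := log7_bounds
  constructor <;> linarith [l3.1, l3.2, l7.1, l7.2]

lemma log17_bounds : 2.8332025 < Real.log 17 ∧ Real.log 17 < 2.8332243 := by
  have h2 : Real.log 289 = 2 * Real.log 17 := by
    rw [show (289:ℝ) = 17 ^ 2 by norm_num, Real.log_pow]; norm_num
  have h288 : Real.log 289 = 5 * Real.log 2 + 2 * Real.log 3 + Real.log (289 / 288) := by
    rw [show (289:ℝ) = 2 ^ 5 * 3 ^ 2 * (289 / 288) by norm_num,
      Real.log_mul (by positivity) (by norm_num), Real.log_mul (by positivity) (by norm_num),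
      Real.log_pow, Real.log_pow]
    norm_num
  obtain ⟨hl, hu⟩ := log_ratio_bounds (show (1:ℝ) ≤ 289/288 by norm_num)
  norm_num at hl hu
  have l2l := Real.log_two_gt_d9
  have l2u := Real.log_two_lt_d9
  have l3 := log3_bounds
  constructor <;> linarith [l3.1, l3.2]

-- `e * log s ≤ s` for all `s > 0`.
lemma e_mul_log_le (s : ℝ) (hs : 0 < s) : Real.exp 1 * Real.log s ≤ s := by
  have he : (0:ℝ) < Real.exp 1 := Real.exp_pos 1
  have h := Real.log_le_sub_one_of_pos (show 0 < s / Real.exp 1 by positivity)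
  rw [Real.log_div (ne_of_gt hs) (ne_of_gt he), Real.log_exp] at h
  have : Real.log s ≤ s / Real.exp 1 := by linarith
  calc Real.exp 1 * Real.log s ≤ Real.exp 1 * (s / Real.exp 1) := by
        exact mul_le_mul_of_nonneg_left this (le_of_lt he)
    _ = s := by field_simp

-- monotonicity transfer: if `X * log B < 2 * B`, `e ≤ B ≤ S`, `0 ≤ X`, then `X * log S < 2 * S`.
lemma lift_lemma {X B S : ℝ} (hX : 0 ≤ X) (heB : Real.exp 1 ≤ B) (hBS : B ≤ S)
    (hmain : X * Real.log B < 2 * B) : X * Real.log S < 2 * S := by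
  have hB1 : 1 ≤ Real.log B := by
    rw [show (1:ℝ) = Real.log (Real.exp 1) by rw [Real.log_exp]]
    exact Real.log_le_log (Real.exp_pos 1) heB
  have hBpos : 0 < B := lt_of_lt_of_le (Real.exp_pos 1) heB
  have hSpos : 0 < S := lt_of_lt_of_le hBpos hBS
  -- INC : B * log S ≤ S * log B
  have hinc : B * Real.log S ≤ S * Real.log B := by
    have h1 : Real.log S ≤ Real.log B + S / B - 1 := log_le_aux hSpos hBpos
    have h2 : B * (S / B) = S := by field_simp
    nlinarith [h2, mul_le_mul_of_nonneg_left h1 (le_of_lt hBpos),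
      mul_nonneg (show (0:ℝ) ≤ S - B by linarith) (show (0:ℝ) ≤ Real.log B - 1 by linarith)]
  -- conclude
  have hLS : Real.log S ≤ S * Real.log B / B := by
    rw [le_div_iff₀ hBpos]; nlinarith
  calc X * Real.log S ≤ X * (S * Real.log B / B) := mul_le_mul_of_nonneg_left hLS hX
    _ = (X * Real.log B) * (S / B) := by ring
    _ < (2 * B) * (S / B) := by
        apply mul_lt_mul_of_pos_right hmain; positivity
    _ = 2 * S := by field_simp

lemma log_le_half {x : ℝ} (hx : 1 ≤ x) : Real.log x ≤ x / 2 := by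
  have hx0 : (0:ℝ) ≤ x := by linarith
  have hs : Real.sqrt x ^ 2 = x := Real.sq_sqrt hx0
  have h1 : Real.log (Real.sqrt x) ≤ Real.sqrt x - 1 := by
    apply Real.log_le_sub_one_of_pos
    have := Real.sqrt_pos.mpr (show 0 < x by linarith)
    exact this
  rw [Real.log_sqrt hx0] at h1
  nlinarith [sq_nonneg (Real.sqrt x - 2)]

lemma step_core {Δ w u up g : ℝ} (hΔ : 2.0794 ≤ Δ) (hw0 : 0 ≤ w) (hw : w ≤ Δ / 2)
    (hu2 : 2 ≤ u) (huw : u ≤ Δ + w) (hup : up ≤ u + 0.2703) (hupu : u ≤ up)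
    (hg1 : 0.69 ≤ g) (hg2 : g ≤ 0.7557) : g * up * u ≤ 2 * Δ * (u - 1) := by
  nlinarith [mul_nonneg (show (0:ℝ) ≤ u - 2 by linarith) (show (0:ℝ) ≤ Δ + w - u by linarith),
    mul_nonneg (show (0:ℝ) ≤ u - 2 by linarith) (show (0:ℝ) ≤ Δ / 2 - w by linarith),
    mul_nonneg (show (0:ℝ) ≤ u - 2 by linarith) (show (0:ℝ) ≤ Δ - 2.0794 by linarith),
    mul_nonneg (mul_nonneg (show (0:ℝ) ≤ 0.7557 - g by linarith)
      (show (0:ℝ) ≤ up by linarith)) (show (0:ℝ) ≤ u by linarith),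
    mul_nonneg (mul_nonneg (show (0:ℝ) ≤ g by linarith) (show (0:ℝ) ≤ u by linarith))
      (show (0:ℝ) ≤ u + 0.2703 - up by linarith)]

noncomputable def dseq (j : ℕ) : ℝ :=
  if j = 1 then 3 else if j = 2 then 5 else if j = 3 then 6 else if j = 4 then 8
  else (j : ℝ) + 2

noncomputable def Dprod (m : ℕ) : ℝ := ∏ j ∈ Finset.range m, dseq (j + 1)
noncomputable def Uprod (m : ℕ) : ℝ := ∏ j ∈ Finset.range m, (2 + 1 / dseq (j + 1))

lemma dseq_ge_three {j : ℕ} (hj : 1 ≤ j) : 3 ≤ dseq j := by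
  unfold dseq
  split_ifs <;> try norm_num
  have h1 : (1:ℝ) ≤ (j:ℝ) := by exact_mod_cast hj
  linarith

lemma dseq_pos {j : ℕ} (hj : 1 ≤ j) : 0 < dseq j := lt_of_lt_of_le (by norm_num) (dseq_ge_three hj)

lemma Uprod_factor_ge {j : ℕ} (hj : 1 ≤ j) : (2:ℝ) ≤ 2 + 1 / dseq j := by
  have h : 0 < 1 / dseq j := by have := dseq_pos hj; positivity
  linarith

lemma Dprod_pos (m : ℕ) : 0 < Dprod m := by
  unfold Dprod
  exact Finset.prod_pos (fun j _ => dseq_pos (Nat.le_add_left 1 j))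

lemma Uprod_pos (m : ℕ) : 0 < Uprod m := by
  unfold Uprod
  exact Finset.prod_pos (fun j _ => lt_of_lt_of_le (by norm_num) (Uprod_factor_ge (Nat.le_add_left 1 j)))

lemma one_le_Uprod (m : ℕ) : 1 ≤ Uprod m := by
  unfold Uprod
  have h := Finset.prod_le_prod (f := fun _ : ℕ => (1:ℝ))
    (g := fun j => 2 + 1 / dseq (j + 1)) (s := Finset.range m)
    (fun _ _ => by norm_num)
    (fun j _ => le_trans (by norm_num) (Uprod_factor_ge (Nat.le_add_left 1 j)))
  simpa using h

lemma Dprod_succ (m : ℕ) : Dprod (m + 1) = Dprod m * dseq (m + 1) := Finset.prod_range_succ _ _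
lemma Uprod_succ (m : ℕ) : Uprod (m + 1) = Uprod m * (2 + 1 / dseq (m + 1)) :=
  Finset.prod_range_succ _ _


lemma Dprod_3 : Dprod 3 = 90 := by
  unfold Dprod
  rw [Finset.prod_range_succ, Finset.prod_range_succ, Finset.prod_range_succ, Finset.prod_range_zero]
  try norm_num [dseq]

lemma Dprod_4 : Dprod 4 = 720 := by
  unfold Dprod
  rw [Finset.prod_range_succ, Finset.prod_range_succ, Finset.prod_range_succ, Finset.prod_range_succ, Finset.prod_range_zero]
  try norm_num [dseq]

lemma Dprod_5 : Dprod 5 = 5040 := by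
  unfold Dprod
  rw [Finset.prod_range_succ, Finset.prod_range_succ, Finset.prod_range_succ, Finset.prod_range_succ, Finset.prod_range_succ, Finset.prod_range_zero]
  try norm_num [dseq]

lemma Uprod_0 : Uprod 0 = 1 := by
  unfold Uprod
  rw [Finset.prod_range_zero]
  try norm_num [dseq]

lemma Uprod_1 : Uprod 1 = 7/3 := by
  unfold Uprod
  rw [Finset.prod_range_succ, Finset.prod_range_zero]
  try norm_num [dseq]

lemma Uprod_2 : Uprod 2 = 77/15 := by
  unfold Uprod
  rw [Finset.prod_range_succ, Finset.prod_range_succ, Finset.prod_range_zero]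
  try norm_num [dseq]

lemma Uprod_3 : Uprod 3 = 1001/90 := by
  unfold Uprod
  rw [Finset.prod_range_succ, Finset.prod_range_succ, Finset.prod_range_succ, Finset.prod_range_zero]
  try norm_num [dseq]

lemma Uprod_4 : Uprod 4 = 17017/720 := by
  unfold Uprod
  rw [Finset.prod_range_succ, Finset.prod_range_succ, Finset.prod_range_succ, Finset.prod_range_succ, Finset.prod_range_zero]
  try norm_num [dseq]

lemma Uprod_5 : Uprod 5 = 36465/720 := by
  unfold Uprod
  rw [Finset.prod_range_succ, Finset.prod_range_succ, Finset.prod_range_succ, Finset.prod_range_succ, Finset.prod_range_succ, Finset.prod_range_zero]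
  try norm_num [dseq]

lemma log_2520 : Real.log 2520 = 3 * Real.log 2 + 2 * Real.log 3 + Real.log 5 + Real.log 7 := by
  rw [show (2520:ℝ) = 2^3 * (3^2 * (5 * 7)) by norm_num,
    Real.log_mul (by positivity) (by positivity),
    Real.log_mul (by positivity) (by positivity),
    Real.log_mul (by positivity) (by positivity), Real.log_pow, Real.log_pow]
  push_cast; ring

lemma log_30 : Real.log 30 = Real.log 2 + Real.log 3 + Real.log 5 := by
  rw [show (30:ℝ) = 2 * (3 * 5) by norm_num,
    Real.log_mul (by positivity) (by positivity),
    Real.log_mul (by positivity) (by positivity)]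
  ring

lemma log_U5 : Real.log (36465/720 : ℝ)
    = Real.log 3 + Real.log 5 + Real.log 11 + Real.log 13 + Real.log 17
      - (4 * Real.log 2 + 2 * Real.log 3 + Real.log 5) := by
  rw [show (36465/720:ℝ) = (3 * (5 * (11 * (13 * 17)))) / (2^4 * (3^2 * 5)) by norm_num,
    Real.log_div (by positivity) (by positivity)]
  rw [Real.log_mul (by positivity) (by positivity),
    Real.log_mul (by positivity) (by positivity),
    Real.log_mul (by positivity) (by positivity),
    Real.log_mul (by positivity) (by positivity)]
  rw [Real.log_mul (by positivity) (by positivity),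
    Real.log_mul (by positivity) (by positivity), Real.log_pow, Real.log_pow]
  push_cast; ring

set_option maxHeartbeats 1000000 in
lemma NUM : ∀ m : ℕ, 5 ≤ m →
    (Real.log 30 + Real.log (Uprod m)) * Real.log (Real.log (Dprod m / 2))
        < 2 * Real.log (Dprod m / 2)
    ∧ 7.5 ≤ Real.log (Dprod m / 2)
    ∧ 3.7 * Real.log ((m:ℝ) + 3) ≤ Real.log (Dprod m / 2)
    ∧ Real.log (Dprod m / 2) ≤ ((m:ℝ) + 3) * Real.log ((m:ℝ) + 3) := by
  intro m hm
  induction m, hm using Nat.le_induction with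
  | base =>
    have hD : Dprod 5 / 2 = (2520:ℝ) := by rw [Dprod_5]; norm_num
    rw [hD, Uprod_5]
    have l2l := Real.log_two_gt_d9
    have l2u := Real.log_two_lt_d9
    have l3 := log3_bounds
    have l5 := log5_bounds
    have l7 := log7_bounds
    have l11 := log11_bounds
    have l13 := log13_bounds
    have l17 := log17_bounds
    have hBv := log_2520
    have hBl : 7.8317945 ≤ Real.log 2520 := by rw [hBv]; linarith [l3.1, l5.1, l7.1]
    have hBu : Real.log 2520 ≤ 7.8322337 := by rw [hBv]; linarith [l3.2, l5.2, l7.2]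
    have hXu : Real.log 30 + Real.log (36465/720 : ℝ) ≤ 7.3262945 := by
      rw [log_30, log_U5]; linarith [l3.2, l5.2, l11.2, l13.2, l17.2]
    have hX0 : 0 ≤ Real.log 30 + Real.log (36465/720 : ℝ) := by
      have h1 : (0:ℝ) ≤ Real.log 30 := Real.log_nonneg (by norm_num)
      have h2 : (0:ℝ) ≤ Real.log (36465/720 : ℝ) := Real.log_nonneg (by norm_num)
      linarith
    have hupos : 0 < Real.log 2520 := by linarith
    have huu : Real.log (Real.log 2520) ≤ 2.0584708 := by
      have h := log_le_aux hupos (show (0:ℝ) < 8 by norm_num)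
      have h8 : Real.log 8 = 3 * Real.log 2 := by
        rw [show (8:ℝ) = 2^3 by norm_num, Real.log_pow]; push_cast; ring
      rw [h8] at h
      linarith
    have hu0 : 0 ≤ Real.log (Real.log 2520) := Real.log_nonneg (by linarith)
    refine ⟨?_, by linarith, ?_, ?_⟩
    · have hmul := mul_le_mul hXu huu hu0 (by norm_num : (0:ℝ) ≤ 7.3262945)
      calc (Real.log 30 + Real.log (36465/720 : ℝ)) * Real.log (Real.log 2520)
          ≤ 7.3262945 * 2.0584708 := hmul
        _ < 2 * Real.log 2520 := by nlinarith
    · have h58 : ((5:ℕ):ℝ) + 3 = 8 := by norm_num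
      rw [h58]
      have h8 : Real.log 8 = 3 * Real.log 2 := by
        rw [show (8:ℝ) = 2^3 by norm_num, Real.log_pow]; push_cast; ring
      rw [h8]; linarith
    · have h58 : ((5:ℕ):ℝ) + 3 = 8 := by norm_num
      rw [h58]
      have h8 : Real.log 8 = 3 * Real.log 2 := by
        rw [show (8:ℝ) = 2^3 by norm_num, Real.log_pow]; push_cast; ring
      rw [h8]; linarith
  | succ m hm ih =>
    obtain ⟨ihmain, ihC1, ihC2, ihC3⟩ := ih
    have hDpos := Dprod_pos m
    have hm5 : (5:ℝ) ≤ (m:ℝ) := by exact_mod_cast hm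
    have hE8 : (8:ℝ) ≤ (m:ℝ) + 3 := by linarith
    have hEpos : (0:ℝ) < (m:ℝ) + 3 := by linarith
    have hdseq : dseq (m+1) = (m:ℝ) + 3 := by
      unfold dseq
      have h1 : m + 1 ≠ 1 := by omega
      have h2 : m + 1 ≠ 2 := by omega
      have h3 : m + 1 ≠ 3 := by omega
      have h4 : m + 1 ≠ 4 := by omega
      rw [if_neg h1, if_neg h2, if_neg h3, if_neg h4]
      push_cast; ring
    set B := Real.log (Dprod m / 2) with hBdef
    set Δ := Real.log ((m:ℝ) + 3) with hΔdef
    have hDsucc : Dprod (m+1) / 2 = (Dprod m / 2) * ((m:ℝ) + 3) := by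
      rw [Dprod_succ, hdseq]; ring
    have hB' : Real.log (Dprod (m+1) / 2) = B + Δ := by
      rw [hDsucc, Real.log_mul (by positivity) (by positivity)]
    have l2l := Real.log_two_gt_d9
    have l2u := Real.log_two_lt_d9
    have h8log : Real.log 8 = 3 * Real.log 2 := by
      rw [show (8:ℝ) = 2^3 by norm_num, Real.log_pow]; push_cast; ring
    have hΔ2 : 2.0794 ≤ Δ := by
      have h := Real.log_le_log (show (0:ℝ) < 8 by norm_num) hE8
      rw [h8log] at h; linarith
    have hΔpos : (0:ℝ) < Δ := by linarith
    have hBpos : (0:ℝ) < B := by linarith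
    set u := Real.log B with hudef
    have hu2 : 2 ≤ u := by
      have h := aux_le_log hBpos (show (0:ℝ) < 8 by norm_num)
      rw [h8log] at h
      have h85 : 8 / B ≤ 8 / 7.5 := by
        apply div_le_div_of_nonneg_left (by norm_num) (by norm_num) ihC1
      linarith
    have hw0 : (0:ℝ) ≤ Real.log Δ := Real.log_nonneg (by linarith)
    have hw : Real.log Δ ≤ Δ / 2 := log_le_half (by linarith)
    have huw : u ≤ Δ + Real.log Δ := by
      have h1 : u ≤ Real.log (((m:ℝ) + 3) * Δ) := Real.log_le_log hBpos ihC3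
      rw [Real.log_mul (ne_of_gt hEpos) (ne_of_gt hΔpos)] at h1
      linarith
    set up := Real.log (B + Δ) with hupdef
    have hupu : u ≤ up := Real.log_le_log hBpos (by linarith)
    have hupB : up - u ≤ Δ / B := by
      have h := log_le_aux (show (0:ℝ) < B + Δ by linarith) hBpos
      have h2 : (B + Δ) / B - 1 = Δ / B := by field_simp; ring
      linarith [h, h2]
    have hΔB : Δ / B ≤ 0.2703 := by
      rw [div_le_iff₀ hBpos]; linarith [ihC2]
    have hup : up ≤ u + 0.2703 := by linarith
    set g := Real.log (2 + 1 / ((m:ℝ) + 3)) with hgdef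
    have hg1' : Real.log 2 ≤ Real.log (2 + 1 / ((m:ℝ) + 3)) := by
      apply Real.log_le_log (by norm_num)
      have : (0:ℝ) < 1 / ((m:ℝ) + 3) := by positivity
      linarith
    have hg1 : 0.69 ≤ g := by rw [hgdef]; linarith
    have hg2 : g ≤ 0.7557 := by
      have hfac : 2 + 1 / ((m:ℝ) + 3) = 2 * (1 + 1 / (2 * ((m:ℝ) + 3))) := by
        field_simp
      have hx : (0:ℝ) < 1 / (2 * ((m:ℝ) + 3)) := by positivity
      have h1 : Real.log (1 + 1 / (2 * ((m:ℝ) + 3))) ≤ 1 / (2 * ((m:ℝ) + 3)) := by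
        have := (log_ratio_bounds (show (1:ℝ) ≤ 1 + 1 / (2 * ((m:ℝ) + 3)) by linarith)).2
        linarith
      have h2 : 1 / (2 * ((m:ℝ) + 3)) ≤ 1 / 16 := by
        rw [div_le_div_iff₀ (by positivity) (by norm_num)]; linarith
      rw [hgdef, hfac, Real.log_mul (by norm_num) (by positivity)]
      linarith
    set X := Real.log 30 + Real.log (Uprod m) with hXdef
    have hX0 : 0 ≤ X := by
      have h1 : (0:ℝ) ≤ Real.log 30 := Real.log_nonneg (by norm_num)
      have h2 : (0:ℝ) ≤ Real.log (Uprod m) := Real.log_nonneg (one_le_Uprod m)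
      rw [hXdef]; linarith
    have hcore := step_core hΔ2 hw0 hw hu2 huw hup hupu hg1 hg2
    have hu0 : (0:ℝ) < u := by linarith
    have hupB' : B * (up - u) ≤ Δ := by
      rw [le_div_iff₀ hBpos] at hupB
      linarith [hupB]
    have hU' : Real.log (Uprod (m+1)) = Real.log (Uprod m) + g := by
      rw [Uprod_succ, Real.log_mul (ne_of_gt (Uprod_pos m)) (by rw [hdseq]; positivity), hdseq]
    have hfin : (X + g) * up < 2 * (B + Δ) := by
      have h1 : X * u * u < 2 * B * u := by
        have := mul_lt_mul_of_pos_right ihmain hu0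
        linarith [this]
      have h2 : X * u * (up - u) ≤ 2 * B * (up - u) :=
        mul_le_mul_of_nonneg_right (le_of_lt ihmain) (by linarith)
      have h3 : 2 * B * (up - u) ≤ 2 * Δ := by linarith [hupB']
      have h5 : ((X + g) * up) * u < (2 * (B + Δ)) * u := by nlinarith [h1, h2, h3, hcore]
      exact lt_of_mul_lt_mul_right h5 (le_of_lt hu0)
    have hcast : ((m + 1 : ℕ):ℝ) + 3 = ((m:ℝ) + 3) + 1 := by push_cast; ring
    have hΔ1u : Real.log (((m:ℝ) + 3) + 1) ≤ Δ + 1/8 := by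
      have h := log_le_aux (show (0:ℝ) < ((m:ℝ)+3) + 1 by linarith) hEpos
      have h2 : (((m:ℝ)+3) + 1) / ((m:ℝ)+3) - 1 = 1 / ((m:ℝ)+3) := by field_simp; ring
      have h3 : 1 / ((m:ℝ)+3) ≤ 1/8 := by
        rw [div_le_div_iff₀ hEpos (by norm_num)]; linarith
      linarith [h, h2]
    have hΔ1l : Δ ≤ Real.log (((m:ℝ) + 3) + 1) := Real.log_le_log hEpos (by linarith)
    refine ⟨?_, ?_, ?_, ?_⟩
    · rw [hB', hU']
      have : Real.log 30 + (Real.log (Uprod m) + g) = X + g := by rw [hXdef]; ring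
      rw [this, ← hupdef]
      exact hfin
    · rw [hB']; linarith
    · rw [hB', hcast]
      linarith
    · rw [hB', hcast]
      have h1 : B + Δ ≤ (((m:ℝ)+3) + 1) * Δ := by nlinarith [ihC3, hΔ1l]
      have h2 : (((m:ℝ)+3) + 1) * Δ ≤ (((m:ℝ)+3) + 1) * Real.log (((m:ℝ)+3) + 1) := by
        apply mul_le_mul_of_nonneg_left hΔ1l (by linarith)
      linarith

lemma odd_card_le {T : Finset ℕ} (hne : T.Nonempty) (hodd : ∀ q ∈ T, Odd q ∧ 7 ≤ q) :
    2 * T.card + 5 ≤ T.max' hne := by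
  have hsub : T ⊆ (Finset.range ((T.max' hne - 7) / 2 + 1)).image (fun i => 2 * i + 7) := by
    intro q hq
    obtain ⟨hoq, h7q⟩ := hodd q hq
    have hqM : q ≤ T.max' hne := Finset.le_max' T q hq
    have heven : Even (q - 7) := Nat.Odd.sub_odd hoq (by decide)
    obtain ⟨t, ht⟩ := heven
    simp only [Finset.mem_image, Finset.mem_range]
    exact ⟨(q - 7) / 2, by omega, by omega⟩
  have h1 := Finset.card_le_card hsub
  have h2 := Finset.card_image_le (s := Finset.range ((T.max' hne - 7) / 2 + 1))
    (f := fun i => 2 * i + 7)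
  rw [Finset.card_range] at h2
  have hM7 : 7 ≤ T.max' hne := (hodd _ (T.max'_mem hne)).2
  omega

lemma prime_max_aux {T : Finset ℕ} (hT : ∀ q ∈ T, Nat.Prime q ∧ 7 ≤ q) (hne : T.Nonempty)
    (R : ℕ)
    (hcard : ((Finset.range R).filter (fun q => Nat.Prime q ∧ 7 ≤ q)).card < T.card) :
    R ≤ T.max' hne := by
  by_contra hlt
  push_neg at hlt
  have hsub : T ⊆ (Finset.range R).filter (fun q => Nat.Prime q ∧ 7 ≤ q) := by
    intro q hq
    rw [Finset.mem_filter, Finset.mem_range]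
    exact ⟨lt_of_le_of_lt (Finset.le_max' T q hq) hlt, hT q hq⟩
  exact absurd (Finset.card_le_card hsub) (by omega)

lemma big_bounds : ∀ T : Finset ℕ, (∀ q ∈ T, Nat.Prime q ∧ 7 ≤ q) →
    Dprod T.card ≤ (∏ q ∈ T, (((q : ℝ) - 1) / 2)) ∧
    (∏ q ∈ T, (2 * (q : ℝ) / ((q : ℝ) - 1))) ≤ Uprod T.card := by
  intro T
  induction T using Finset.strongInduction with
  | _ T ih =>
    intro hT
    rcases T.eq_empty_or_nonempty with rfl | hne
    · simp [Dprod, Uprod]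
    · have hq0T : T.max' hne ∈ T := T.max'_mem hne
      set q0 := T.max' hne with hq0
      obtain ⟨hq0p, hq07⟩ := hT q0 hq0T
      have hss : T.erase q0 ⊂ T := Finset.erase_ssubset hq0T
      have hT'h : ∀ q ∈ T.erase q0, Nat.Prime q ∧ 7 ≤ q :=
        fun q hq => hT q (Finset.mem_of_mem_erase hq)
      obtain ⟨ihD, ihU⟩ := ih (T.erase q0) hss hT'h
      have hpos : 0 < T.card := Finset.card_pos.mpr hne
      have hcard : (T.erase q0).card = T.card - 1 := Finset.card_erase_of_mem hq0T
      have hcard' : T.card = (T.erase q0).card + 1 := by omega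
      -- key size bound on q0
      have hq0big : 2 * dseq T.card + 1 ≤ (q0 : ℝ) := by
        have hsplit : T.card = 1 ∨ T.card = 2 ∨ T.card = 3 ∨ T.card = 4 ∨ 5 ≤ T.card := by omega
        rcases hsplit with h | h | h | h | h
        · rw [h]; norm_num [dseq]; exact_mod_cast hq07
        · have h11 : 11 ≤ q0 := by
            apply prime_max_aux hT hne 11
            rw [show ((Finset.range 11).filter (fun q => Nat.Prime q ∧ 7 ≤ q)).card = 1
              from by decide]
            omega
          rw [h]; norm_num [dseq]; exact_mod_cast h11
        · have h13 : 13 ≤ q0 := by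
            apply prime_max_aux hT hne 13
            rw [show ((Finset.range 13).filter (fun q => Nat.Prime q ∧ 7 ≤ q)).card = 2
              from by decide]
            omega
          rw [h]; norm_num [dseq]; exact_mod_cast h13
        · have h17 : 17 ≤ q0 := by
            apply prime_max_aux hT hne 17
            rw [show ((Finset.range 17).filter (fun q => Nat.Prime q ∧ 7 ≤ q)).card = 3
              from by decide]
            omega
          rw [h]; norm_num [dseq]; exact_mod_cast h17
        · have hodd : ∀ q ∈ T, Odd q ∧ 7 ≤ q := by
            intro q hq
            obtain ⟨hp, h7⟩ := hT q hq
            exact ⟨hp.odd_of_ne_two (by omega), h7⟩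
          have hmax := odd_card_le hne hodd
          have hd : dseq T.card = (T.card : ℝ) + 2 := by
            unfold dseq
            rw [if_neg (by omega), if_neg (by omega), if_neg (by omega), if_neg (by omega)]
          rw [hd]
          have : ((2 * T.card + 5 : ℕ) : ℝ) ≤ (q0 : ℝ) := by exact_mod_cast hmax
          push_cast at this ⊢
          linarith
      have hd1 : 1 ≤ T.card := hpos
      have hdpos : (0 : ℝ) < dseq T.card := dseq_pos hd1
      have hq01 : (0 : ℝ) < (q0 : ℝ) - 1 := by
        have : (7 : ℝ) ≤ (q0 : ℝ) := by exact_mod_cast hq07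
        linarith
      have helemD : dseq T.card ≤ ((q0 : ℝ) - 1) / 2 := by linarith
      have helemU : 2 * (q0 : ℝ) / ((q0 : ℝ) - 1) ≤ 2 + 1 / dseq T.card := by
        rw [div_le_iff₀ hq01]
        have key : (2 : ℝ) ≤ ((q0 : ℝ) - 1) / dseq T.card := by
          rw [le_div_iff₀ hdpos]; linarith
        have e : (2 + 1 / dseq T.card) * ((q0 : ℝ) - 1)
            = 2 * ((q0 : ℝ) - 1) + ((q0 : ℝ) - 1) / dseq T.card := by ring
        rw [e]; linarith
      have hprodDsplit : (∏ q ∈ T, (((q : ℝ) - 1) / 2))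
          = (((q0 : ℝ) - 1) / 2) * ∏ q ∈ T.erase q0, (((q : ℝ) - 1) / 2) :=
        (Finset.mul_prod_erase T _ hq0T).symm
      have hprodUsplit : (∏ q ∈ T, (2 * (q : ℝ) / ((q : ℝ) - 1)))
          = (2 * (q0 : ℝ) / ((q0 : ℝ) - 1)) * ∏ q ∈ T.erase q0, (2 * (q : ℝ) / ((q : ℝ) - 1)) :=
        (Finset.mul_prod_erase T _ hq0T).symm
      have hprodD_nonneg : (0 : ℝ) ≤ ∏ q ∈ T.erase q0, (((q : ℝ) - 1) / 2) := by
        apply Finset.prod_nonneg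
        intro q hq
        have : (7 : ℝ) ≤ (q : ℝ) := by exact_mod_cast (hT'h q hq).2
        linarith
      have hprodU_nonneg : (0 : ℝ) ≤ ∏ q ∈ T.erase q0, (2 * (q : ℝ) / ((q : ℝ) - 1)) := by
        apply Finset.prod_nonneg
        intro q hq
        have h7 : (7 : ℝ) ≤ (q : ℝ) := by exact_mod_cast (hT'h q hq).2
        have hq1 : (0:ℝ) < (q:ℝ) - 1 := by linarith
        positivity
      constructor
      · rw [hcard', Dprod_succ, hprodDsplit, ← hcard']
        calc Dprod (T.erase q0).card * dseq T.card
            ≤ (∏ q ∈ T.erase q0, (((q : ℝ) - 1) / 2)) * (((q0 : ℝ) - 1) / 2) := by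
              apply mul_le_mul ihD helemD (le_of_lt hdpos) hprodD_nonneg
          _ = (((q0 : ℝ) - 1) / 2) * ∏ q ∈ T.erase q0, (((q : ℝ) - 1) / 2) := by ring
      · rw [hcard', Uprod_succ, hprodUsplit, ← hcard']
        have hU2 : (0:ℝ) ≤ 2 + 1 / dseq T.card := by positivity
        calc (2 * (q0 : ℝ) / ((q0 : ℝ) - 1)) * ∏ q ∈ T.erase q0, (2 * (q : ℝ) / ((q : ℝ) - 1))
            ≤ (2 + 1 / dseq T.card) * Uprod (T.erase q0).card := by
              apply mul_le_mul helemU ihU hprodU_nonneg hU2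
          _ = Uprod (T.erase q0).card * (2 + 1 / dseq T.card) := by ring

lemma small_primes_bounds {Qs : Finset ℕ} (hQs : Qs ⊆ ({2, 3, 5} : Finset ℕ)) :
    ((∏ p ∈ Qs, (2 * (p:ℝ) / ((p:ℝ) - 1))) ≤ 30 ∧ 1 ≤ ∏ p ∈ Qs, (((p:ℝ) - 1) / 2)) ∨
    ((∏ p ∈ Qs, (2 * (p:ℝ) / ((p:ℝ) - 1))) ≤ 12 ∧ 1/2 ≤ ∏ p ∈ Qs, (((p:ℝ) - 1) / 2)) := by
  have hrep : Qs = ({2, 3, 5} : Finset ℕ).filter (· ∈ Qs) := by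
    ext q
    simp only [Finset.mem_filter]
    constructor
    · intro hq; exact ⟨hQs hq, hq⟩
    · intro hq; exact hq.2
  rw [hrep]
  rw [Finset.prod_filter, Finset.prod_filter]
  rw [show ({2, 3, 5} : Finset ℕ) = insert 2 (insert 3 {5}) from rfl]
  rw [Finset.prod_insert (by decide), Finset.prod_insert (by decide), Finset.prod_singleton,
    Finset.prod_insert (by decide), Finset.prod_insert (by decide), Finset.prod_singleton]
  by_cases h2 : 2 ∈ Qs <;> by_cases h3 : 3 ∈ Qs <;> by_cases h5 : 5 ∈ Qs <;>
    simp only [h2, h3, h5, if_true, if_false, ite_true, ite_false] <;>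
    first
      | (left; constructor <;> norm_num <;> done)
      | (right; constructor <;> norm_num)

lemma log_90 : Real.log 90 = Real.log 2 + 2 * Real.log 3 + Real.log 5 := by
  rw [show (90:ℝ) = 2 * (3^2 * 5) by norm_num, Real.log_mul (by positivity) (by positivity),
    Real.log_mul (by positivity) (by positivity), Real.log_pow]
  push_cast; ring

lemma log_45 : Real.log 45 = 2 * Real.log 3 + Real.log 5 := by
  rw [show (45:ℝ) = 3^2 * 5 by norm_num, Real.log_mul (by positivity) (by positivity),
    Real.log_pow]
  push_cast; ring

lemma log_360 : Real.log 360 = 3 * Real.log 2 + 2 * Real.log 3 + Real.log 5 := by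
  rw [show (360:ℝ) = 2^3 * (3^2 * 5) by norm_num, Real.log_mul (by positivity) (by positivity),
    Real.log_mul (by positivity) (by positivity), Real.log_pow, Real.log_pow]
  push_cast; ring

lemma log_U3 : Real.log ((1001:ℝ)/90)
    = Real.log 7 + Real.log 11 + Real.log 13 - (Real.log 2 + 2 * Real.log 3 + Real.log 5) := by
  rw [show (1001/90:ℝ) = (7 * (11 * 13)) / 90 by norm_num,
    Real.log_div (by positivity) (by norm_num), Real.log_mul (by positivity) (by positivity),
    Real.log_mul (by positivity) (by positivity), log_90]
  ring

lemma log_U4 : Real.log ((17017:ℝ)/720)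
    = Real.log 7 + Real.log 11 + Real.log 13 + Real.log 17
      - (4 * Real.log 2 + 2 * Real.log 3 + Real.log 5) := by
  rw [show (17017/720:ℝ) = (7 * (11 * (13 * 17))) / (2^4 * (3^2 * 5)) by norm_num,
    Real.log_div (by positivity) (by positivity),
    Real.log_mul (by positivity) (by positivity),
    Real.log_mul (by positivity) (by positivity),
    Real.log_mul (by positivity) (by positivity),
    Real.log_mul (by positivity) (by positivity),
    Real.log_mul (by positivity) (by positivity),
    Real.log_pow, Real.log_pow]
  push_cast; ring

lemma log_12 : Real.log 12 = 2 * Real.log 2 + Real.log 3 := by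
  rw [show (12:ℝ) = 2^2 * 3 by norm_num, Real.log_mul (by positivity) (by positivity),
    Real.log_pow]
  push_cast; ring

-- numeric main inequalities for m = 3 (two subcases) and m = 4
lemma num3a : (Real.log 30 + Real.log (Uprod 3)) * Real.log (Real.log 90) < 2 * Real.log 90 := by
  have l2l := Real.log_two_gt_d9; have l2u := Real.log_two_lt_d9
  have l3 := log3_bounds; have l5 := log5_bounds; have l7 := log7_bounds
  have l11 := log11_bounds; have l13 := log13_bounds
  rw [Uprod_3, show ((1001:ℝ)/90 : ℝ) = ((1001:ℝ)/90) by norm_num]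
  have hX : Real.log 30 + Real.log ((1001:ℝ)/90) ≤ 5.8103972 := by
    rw [log_30, log_U3]; linarith [l3.1, l7.2, l11.2, l13.2]
  have hX0 : 0 ≤ Real.log 30 + Real.log ((1001:ℝ)/90) := by
    have h1 : (0:ℝ) ≤ Real.log 30 := Real.log_nonneg (by norm_num)
    have h2 : (0:ℝ) ≤ Real.log ((1001:ℝ)/90) := Real.log_nonneg (by norm_num)
    linarith
  have hBl : 4.4996997 ≤ Real.log 90 := by rw [log_90]; linarith [l3.1, l5.1]
  have hBu : Real.log 90 ≤ 4.5 := by rw [log_90]; linarith [l3.2, l5.2]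
  have hlogB : Real.log (Real.log 90) ≤ 1.5040929 := by
    have h1 : Real.log (Real.log 90) ≤ Real.log 4.5 :=
      Real.log_le_log (by linarith) hBu
    have h2 : Real.log 4.5 = 2 * Real.log 3 - Real.log 2 := by
      rw [show (4.5:ℝ) = 3^2 / 2 by norm_num, Real.log_div (by positivity) (by norm_num),
        Real.log_pow]
      push_cast; ring
    rw [h2] at h1; linarith [l3.2]
  have hlogB0 : 0 ≤ Real.log (Real.log 90) := Real.log_nonneg (by linarith)
  have := mul_le_mul hX hlogB hlogB0 (by norm_num : (0:ℝ) ≤ 5.8103972)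
  nlinarith

lemma num3b : (Real.log 12 + Real.log (Uprod 3)) * Real.log (Real.log 45) < 2 * Real.log 45 := by
  have l2l := Real.log_two_gt_d9; have l2u := Real.log_two_lt_d9
  have l3 := log3_bounds; have l5 := log5_bounds; have l7 := log7_bounds
  have l11 := log11_bounds; have l13 := log13_bounds
  rw [Uprod_3]
  have hX : Real.log 12 + Real.log ((1001:ℝ)/90) ≤ 4.8942010 := by
    rw [log_12, log_U3]; linarith [l3.1, l5.1, l7.2, l11.2, l13.2]
  have hX0 : 0 ≤ Real.log 12 + Real.log ((1001:ℝ)/90) := by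
    have h1 : (0:ℝ) ≤ Real.log 12 := Real.log_nonneg (by norm_num)
    have h2 : (0:ℝ) ≤ Real.log ((1001:ℝ)/90) := Real.log_nonneg (by norm_num)
    linarith
  have hBl : 3.8065526 ≤ Real.log 45 := by rw [log_45]; linarith [l3.1, l5.1]
  have hBu : Real.log 45 ≤ 4.5 := by rw [log_45]; linarith [l3.2, l5.2]
  have hlogB : Real.log (Real.log 45) ≤ 1.5040929 := by
    have h1 : Real.log (Real.log 45) ≤ Real.log 4.5 :=
      Real.log_le_log (by linarith) hBu
    have h2 : Real.log 4.5 = 2 * Real.log 3 - Real.log 2 := by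
      rw [show (4.5:ℝ) = 3^2 / 2 by norm_num, Real.log_div (by positivity) (by norm_num),
        Real.log_pow]
      push_cast; ring
    rw [h2] at h1; linarith [l3.2]
  have hlogB0 : 0 ≤ Real.log (Real.log 45) := Real.log_nonneg (by linarith)
  have := mul_le_mul hX hlogB hlogB0 (by norm_num : (0:ℝ) ≤ 4.8942010)
  nlinarith

lemma num4 : (Real.log 30 + Real.log (Uprod 4)) * Real.log (Real.log 360) < 2 * Real.log 360 := by
  have l2l := Real.log_two_gt_d9; have l2u := Real.log_two_lt_d9
  have l3 := log3_bounds; have l5 := log5_bounds; have l7 := log7_bounds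
  have l11 := log11_bounds; have l13 := log13_bounds; have l17 := log17_bounds
  rw [Uprod_4]
  have hX : Real.log 30 + Real.log ((17017:ℝ)/720) ≤ 6.5641800 := by
    rw [log_30, log_U4]; linarith [l3.1, l7.2, l11.2, l13.2, l17.2]
  have hX0 : 0 ≤ Real.log 30 + Real.log ((17017:ℝ)/720) := by
    have h1 : (0:ℝ) ≤ Real.log 30 := Real.log_nonneg (by norm_num)
    have h2 : (0:ℝ) ≤ Real.log ((17017:ℝ)/720) := Real.log_nonneg (by norm_num)
    linarith
  have hBl : 5.8859922 ≤ Real.log 360 := by rw [log_360]; linarith [l3.1, l5.1]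
  have hBu : Real.log 360 ≤ 5.8862127 := by rw [log_360]; linarith [l3.2, l5.2]
  have hlogB : Real.log (Real.log 360) ≤ 1.7728027 := by
    have h1 := log_le_aux (show (0:ℝ) < Real.log 360 by linarith) (show (0:ℝ) < 6 by norm_num)
    have h2 : Real.log 6 = Real.log 2 + Real.log 3 := by
      rw [show (6:ℝ) = 2 * 3 by norm_num, Real.log_mul (by norm_num) (by norm_num)]
    rw [h2] at h1; linarith [l3.2]
  have hlogB0 : 0 ≤ Real.log (Real.log 360) := Real.log_nonneg (by linarith)
  have := mul_le_mul hX hlogB hlogB0 (by norm_num : (0:ℝ) ≤ 6.5641800)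
  nlinarith

set_option maxHeartbeats 1000000 in
lemma main_case (n : ℕ) (hn : 0 < n) (a : ℝ) (ha : 8 ≤ a) (m : ℕ) (cA cB : ℝ)
    (hcase : (cA = 30 ∧ cB = 1) ∨ (cA = 12 ∧ cB = 1/2))
    (hnle : (n:ℝ) ≤ a * (cA * Uprod m))
    (hDa : cB * Dprod m ≤ a) :
    (n : ℝ) < a ^ (1 + 2 / Real.log (Real.log a)) := by
  have ha0 : (0:ℝ) < a := by linarith
  have hcA0 : (0:ℝ) < cA := by rcases hcase with ⟨h1, _⟩ | ⟨h1, _⟩ <;> rw [h1] <;> norm_num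
  have hcA30 : cA ≤ 30 := by rcases hcase with ⟨h1, _⟩ | ⟨h1, _⟩ <;> rw [h1] <;> norm_num
  have hcB : (1:ℝ)/2 ≤ cB := by rcases hcase with ⟨_, h1⟩ | ⟨_, h1⟩ <;> rw [h1] <;> norm_num
  have hUpos := Uprod_pos m
  have hDpos := Dprod_pos m
  have hnpos : (0:ℝ) < (n:ℝ) := by exact_mod_cast hn
  set S := Real.log a with hSdef
  have hS8 : Real.log 8 ≤ S := Real.log_le_log (by norm_num) ha
  have h8log : Real.log 8 = 3 * Real.log 2 := by
    rw [show (8:ℝ) = 2^3 by norm_num, Real.log_pow]; push_cast; ring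
  have l2l := Real.log_two_gt_d9
  have l2u := Real.log_two_lt_d9
  have hSl : 2.0794415 ≤ S := by rw [h8log] at hS8; linarith
  have hL0 : (0:ℝ) < Real.log S := Real.log_pos (by linarith)
  set L := Real.log S with hLdef
  set X := Real.log cA + Real.log (Uprod m) with hXdef
  have hX0 : 0 ≤ X := by
    have h1 : (0:ℝ) ≤ Real.log cA := by
      apply Real.log_nonneg
      rcases hcase with ⟨h1, _⟩ | ⟨h1, _⟩ <;> rw [h1] <;> norm_num
    have h2 : (0:ℝ) ≤ Real.log (Uprod m) := Real.log_nonneg (one_le_Uprod m)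
    linarith
  have hlogn : Real.log n ≤ S + X := by
    calc Real.log n ≤ Real.log (a * (cA * Uprod m)) := Real.log_le_log hnpos hnle
      _ = S + X := by
          rw [Real.log_mul (ne_of_gt ha0) (by positivity),
            Real.log_mul (ne_of_gt hcA0) (ne_of_gt hUpos)]
  have hXle30 : X ≤ Real.log 30 + Real.log (Uprod m) := by
    have : Real.log cA ≤ Real.log 30 := Real.log_le_log hcA0 hcA30
    linarith
  have heS : Real.exp 1 < 7.5 := by
    have := Real.exp_one_lt_d9; linarith
  -- main inequality  X * L < 2 * S  by cases on m
  have hXL : X * L < 2 * S := by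
    have hm5 : m ≤ 2 ∨ m = 3 ∨ m = 4 ∨ 5 ≤ m := by omega
    rcases hm5 with hm' | hm' | hm' | hm'
    · -- small m : crude bound via e * L ≤ S
      have hU : Uprod m ≤ 77/15 := by
        interval_cases m
        · rw [Uprod_0]; norm_num
        · rw [Uprod_1]; norm_num
        · rw [Uprod_2]
      have l3 := log3_bounds; have l5 := log5_bounds
      have l7 := log7_bounds; have l11 := log11_bounds
      have hlogU : Real.log (Uprod m) ≤ Real.log (77/15) := Real.log_le_log hUpos hU
      have hlog7715 : Real.log ((77:ℝ)/15)
          = Real.log 7 + Real.log 11 - (Real.log 3 + Real.log 5) := by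
        rw [show ((77:ℝ)/15) = (7 * 11) / (3 * 5) by norm_num,
          Real.log_div (by positivity) (by norm_num),
          Real.log_mul (by norm_num) (by norm_num),
          Real.log_mul (by norm_num) (by norm_num)]
      have hlog30 : Real.log 30 = Real.log 2 + Real.log 3 + Real.log 5 := by
        rw [show (30:ℝ) = 2 * (3 * 5) by norm_num,
          Real.log_mul (by positivity) (by positivity),
          Real.log_mul (by positivity) (by positivity)]
        ring
      have hXnum : X ≤ 5.038 := by
        rw [hXdef]
        have h30 : Real.log 30 ≤ 3.4012982 := by rw [hlog30]; linarith [l3.2, l5.2]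
        have h7715 : Real.log ((77:ℝ)/15) ≤ 1.6360361 := by
          rw [hlog7715]; linarith [l7.2, l11.2, l3.1, l5.1]
        have : Real.log cA ≤ Real.log 30 := Real.log_le_log hcA0 hcA30
        linarith
      have hSL := e_mul_log_le S (by linarith)
      have hexp := Real.exp_one_gt_d9
      calc X * L ≤ 5.038 * L := mul_le_mul_of_nonneg_right hXnum (le_of_lt hL0)
        _ < 5.4365636566 * L := by nlinarith
        _ ≤ 2 * (Real.exp 1 * L) := by nlinarith
        _ ≤ 2 * S := by linarith [hSL]
    · -- m = 3
      subst hm'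
      rw [Dprod_3] at hDa
      rcases hcase with ⟨hA, hB⟩ | ⟨hA, hB⟩
      · -- cA = 30, cB = 1 : use B = log 90
        rw [hB, one_mul] at hDa
        have hBS : Real.log 90 ≤ S := Real.log_le_log (by norm_num) hDa
        have heB : Real.exp 1 ≤ Real.log 90 := by
          have l3 := log3_bounds; have l5 := log5_bounds
          have h90 : (4.4996997:ℝ) ≤ Real.log 90 := by rw [log_90]; linarith [l3.1, l5.1]
          have := Real.exp_one_lt_d9
          linarith
        have hmain : X * Real.log (Real.log 90) < 2 * Real.log 90 := by
          rw [hXdef, hA]; exact num3a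
        exact lift_lemma hX0 heB hBS hmain
      · -- cA = 12, cB = 1/2 : use B = log 45
        rw [hB] at hDa
        have hDa' : (45:ℝ) ≤ a := by linarith
        have hBS : Real.log 45 ≤ S := Real.log_le_log (by norm_num) hDa'
        have heB : Real.exp 1 ≤ Real.log 45 := by
          have l3 := log3_bounds; have l5 := log5_bounds
          have h45 : (3.8065526:ℝ) ≤ Real.log 45 := by rw [log_45]; linarith [l3.1, l5.1]
          have := Real.exp_one_lt_d9
          linarith
        have hmain : X * Real.log (Real.log 45) < 2 * Real.log 45 := by
          rw [hXdef, hA]; exact num3b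
        exact lift_lemma hX0 heB hBS hmain
    · -- m = 4
      subst hm'
      rw [Dprod_4] at hDa
      have hDa' : (360:ℝ) ≤ a := by nlinarith
      have hBS : Real.log 360 ≤ S := Real.log_le_log (by norm_num) hDa'
      have l3 := log3_bounds; have l5 := log5_bounds
      have h360 : (5.8859922:ℝ) ≤ Real.log 360 := by rw [log_360]; linarith [l3.1, l5.1]
      have heB : Real.exp 1 ≤ Real.log 360 := by
        have := Real.exp_one_lt_d9; linarith
      have hlogB0 : (0:ℝ) ≤ Real.log (Real.log 360) := Real.log_nonneg (by linarith)
      have hmain : X * Real.log (Real.log 360) < 2 * Real.log 360 := by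
        calc X * Real.log (Real.log 360)
            ≤ (Real.log 30 + Real.log (Uprod 4)) * Real.log (Real.log 360) :=
              mul_le_mul_of_nonneg_right hXle30 hlogB0
          _ < 2 * Real.log 360 := num4
      exact lift_lemma hX0 heB hBS hmain
    · -- m ≥ 5
      obtain ⟨hmain5, hC1, _, _⟩ := NUM m hm'
      have hDa' : Dprod m / 2 ≤ a := by nlinarith
      have hBS : Real.log (Dprod m / 2) ≤ S := Real.log_le_log (by positivity) hDa'
      have heB : Real.exp 1 ≤ Real.log (Dprod m / 2) := by linarith
      have hlogB0 : (0:ℝ) ≤ Real.log (Real.log (Dprod m / 2)) :=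
        Real.log_nonneg (by linarith)
      have hmain : X * Real.log (Real.log (Dprod m / 2)) < 2 * Real.log (Dprod m / 2) := by
        calc X * Real.log (Real.log (Dprod m / 2))
            ≤ (Real.log 30 + Real.log (Uprod m)) * Real.log (Real.log (Dprod m / 2)) :=
              mul_le_mul_of_nonneg_right hXle30 hlogB0
          _ < 2 * Real.log (Dprod m / 2) := hmain5
      exact lift_lemma hX0 heB hBS hmain
  -- conclude
  have hXlt : X < 2 * S / L := by rw [lt_div_iff₀ hL0]; exact hXL
  have hfin : Real.log n < S * (1 + 2 / L) := by
    have e1 : S * (1 + 2 / L) = S + 2 * S / L := by ring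
    rw [e1]; linarith
  have hexp := Real.exp_lt_exp.mpr hfin
  rw [Real.exp_log hnpos] at hexp
  calc (n:ℝ) < Real.exp (S * (1 + 2 / L)) := hexp
    _ = a ^ (1 + 2 / L) := by
        rw [Real.rpow_def_of_pos ha0]

set_option maxHeartbeats 1000000 in
/-- If `n` is a positive integer, `a ≥ 8` is real, and
`φ(n) / 2^(ω(n)) ≤ a`, then `n < a ^ (1 + 2 / log log a)`. -/
theorem lt_of_totient_div_two_pow_omega_le (n : ℕ) (hn : 0 < n) (a : ℝ)
    (ha : 8 ≤ a) (h : (n.totient : ℝ) / 2 ^ n.primeFactors.card ≤ a) :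
    (n : ℝ) < a ^ (1 + 2 / Real.log (Real.log a)) := by
  classical
  have ha0 : (0:ℝ) < a := by linarith
  set Q := n.primeFactors with hQ
  set k := Q.card with hk
  have hprime : ∀ p ∈ Q, Nat.Prime p := fun p hp => Nat.prime_of_mem_primeFactors hp
  have hp2 : ∀ p ∈ Q, (2:ℝ) ≤ (p:ℝ) := by
    intro p hp; exact_mod_cast (hprime p hp).two_le
  have hkey : (n.totient : ℝ) * ∏ p ∈ Q, (p:ℝ) = (n:ℝ) * ∏ p ∈ Q, ((p:ℝ) - 1) := by
    have h0 := Nat.totient_mul_prod_primeFactors n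
    have h1 : ((n.totient * ∏ p ∈ Q, p : ℕ) : ℝ) = ((n * ∏ p ∈ Q, (p - 1) : ℕ) : ℝ) := by
      exact_mod_cast congrArg (fun x : ℕ => (x:ℝ)) h0
    rw [Nat.cast_mul, Nat.cast_mul, Nat.cast_prod, Nat.cast_prod] at h1
    rw [h1]
    congr 1
    apply Finset.prod_congr rfl
    intro p hp
    have h1p : 1 ≤ p := (hprime p hp).one_lt.le
    push_cast [Nat.cast_sub h1p]
    ring
  have hPpos : (0:ℝ) < ∏ p ∈ Q, ((p:ℝ) - 1) :=
    Finset.prod_pos (fun p hp => by have := hp2 p hp; linarith)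
  have hP2pos : (0:ℝ) < ∏ p ∈ Q, (p:ℝ) :=
    Finset.prod_pos (fun p hp => by have := hp2 p hp; linarith)
  have h2kpos : (0:ℝ) < 2 ^ k := by positivity
  have hcancel : (∏ p ∈ Q, (2 * (p:ℝ) / ((p:ℝ) - 1))) * (∏ p ∈ Q, ((p:ℝ) - 1))
      = 2 ^ k * ∏ p ∈ Q, (p:ℝ) := by
    rw [← Finset.prod_mul_distrib]
    rw [show (2:ℝ) ^ k = ∏ _p ∈ Q, (2:ℝ) from by rw [Finset.prod_const, hk]]
    rw [← Finset.prod_mul_distrib]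
    apply Finset.prod_congr rfl
    intro p hp
    have h2p := hp2 p hp
    rw [div_mul_cancel₀ _ (show (p:ℝ) - 1 ≠ 0 from ne_of_gt (by linarith))]
  have htot_le : (n.totient : ℝ) ≤ a * 2 ^ k := by
    rw [div_le_iff₀ h2kpos] at h; linarith
  have hn_le : (n:ℝ) ≤ a * ∏ p ∈ Q, (2 * (p:ℝ) / ((p:ℝ) - 1)) := by
    have hstep : (n:ℝ) * ∏ p ∈ Q, ((p:ℝ) - 1)
        ≤ (a * ∏ p ∈ Q, (2 * (p:ℝ) / ((p:ℝ) - 1))) * ∏ p ∈ Q, ((p:ℝ) - 1) := by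
      rw [mul_assoc, hcancel, ← hkey, ← mul_assoc]
      exact mul_le_mul_of_nonneg_right htot_le (le_of_lt hP2pos)
    exact le_of_mul_le_mul_right hstep hPpos
  have hrad_le : (∏ p ∈ Q, (p:ℝ)) ≤ (n:ℝ) := by
    have hdvd : (∏ p ∈ Q, p) ∣ n := Nat.prod_primeFactors_dvd n
    have h2 : ((∏ p ∈ Q, p : ℕ) : ℝ) ≤ (n:ℝ) := by exact_mod_cast Nat.le_of_dvd hn hdvd
    rwa [Nat.cast_prod] at h2
  have htot_ge : (∏ p ∈ Q, ((p:ℝ) - 1)) ≤ (n.totient : ℝ) := by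
    have hstep : (∏ p ∈ Q, ((p:ℝ) - 1)) * (∏ p ∈ Q, (p:ℝ))
        ≤ (n.totient : ℝ) * ∏ p ∈ Q, (p:ℝ) := by
      rw [hkey]
      calc (∏ p ∈ Q, ((p:ℝ) - 1)) * (∏ p ∈ Q, (p:ℝ))
          ≤ (∏ p ∈ Q, ((p:ℝ) - 1)) * (n:ℝ) :=
            mul_le_mul_of_nonneg_left hrad_le (le_of_lt hPpos)
        _ = (n:ℝ) * ∏ p ∈ Q, ((p:ℝ) - 1) := by ring
    exact le_of_mul_le_mul_right hstep hP2pos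
  have hB_le : (∏ p ∈ Q, (((p:ℝ) - 1) / 2)) ≤ a := by
    have e : (∏ p ∈ Q, (((p:ℝ) - 1) / 2)) = (∏ p ∈ Q, ((p:ℝ) - 1)) / 2 ^ k := by
      rw [Finset.prod_div_distrib, Finset.prod_const, hk]
    rw [e]
    calc (∏ p ∈ Q, ((p:ℝ) - 1)) / 2 ^ k ≤ (n.totient : ℝ) / 2 ^ k :=
          by gcongr
      _ ≤ a := h
  -- split products
  set QB := Q.filter (fun p => ¬ p < 7) with hQB
  set m := QB.card with hm
  have hsplitU : (∏ p ∈ Q, (2 * (p:ℝ) / ((p:ℝ) - 1)))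
      = (∏ p ∈ Q.filter (fun p => p < 7), (2 * (p:ℝ) / ((p:ℝ) - 1)))
        * ∏ p ∈ QB, (2 * (p:ℝ) / ((p:ℝ) - 1)) :=
    (Finset.prod_filter_mul_prod_filter_not Q _ _).symm
  have hsplitD : (∏ p ∈ Q, (((p:ℝ) - 1) / 2))
      = (∏ p ∈ Q.filter (fun p => p < 7), (((p:ℝ) - 1) / 2))
        * ∏ p ∈ QB, (((p:ℝ) - 1) / 2) :=
    (Finset.prod_filter_mul_prod_filter_not Q _ _).symm
  have hQs_sub : Q.filter (fun p => p < 7) ⊆ ({2, 3, 5} : Finset ℕ) := by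
    intro p hp
    rw [Finset.mem_filter] at hp
    have hpp := hprime p hp.1
    have h2 := hpp.two_le
    have h7 := hp.2
    interval_cases p <;> first | decide | exact absurd hpp (by decide)
  have hQB_prime : ∀ q ∈ QB, Nat.Prime q ∧ 7 ≤ q := by
    intro q hq
    rw [hQB, Finset.mem_filter] at hq
    exact ⟨hprime q hq.1, by omega⟩
  obtain ⟨hDm, hUm⟩ := big_bounds QB hQB_prime
  rw [← hm] at hDm hUm
  have hUBpos : (0:ℝ) < ∏ p ∈ QB, (2 * (p:ℝ) / ((p:ℝ) - 1)) := by
    apply Finset.prod_pos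
    intro q hq
    have h7 : (7:ℝ) ≤ (q:ℝ) := by exact_mod_cast (hQB_prime q hq).2
    have : (0:ℝ) < (q:ℝ) - 1 := by linarith
    positivity
  have hDBpos : (0:ℝ) < ∏ p ∈ QB, (((p:ℝ) - 1) / 2) := by
    apply Finset.prod_pos
    intro q hq
    have h7 : (7:ℝ) ≤ (q:ℝ) := by exact_mod_cast (hQB_prime q hq).2
    linarith
  obtain ⟨hsA, hsB⟩ | ⟨hsA, hsB⟩ := small_primes_bounds hQs_sub
  · -- cA = 30, cB = 1
    apply main_case n hn a ha m 30 1 (Or.inl ⟨rfl, rfl⟩)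
    · calc (n:ℝ) ≤ a * ∏ p ∈ Q, (2 * (p:ℝ) / ((p:ℝ) - 1)) := hn_le
        _ = a * ((∏ p ∈ Q.filter (fun p => p < 7), (2 * (p:ℝ) / ((p:ℝ) - 1)))
              * ∏ p ∈ QB, (2 * (p:ℝ) / ((p:ℝ) - 1))) := by rw [hsplitU]
        _ ≤ a * (30 * Uprod m) := by
            apply mul_le_mul_of_nonneg_left _ (le_of_lt ha0)
            exact mul_le_mul hsA hUm (le_of_lt hUBpos) (by norm_num)
    · calc (1:ℝ) * Dprod m ≤ 1 * ∏ p ∈ QB, (((p:ℝ) - 1) / 2) := by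
            rw [one_mul, one_mul]; exact hDm
        _ ≤ (∏ p ∈ Q.filter (fun p => p < 7), (((p:ℝ) - 1) / 2))
              * ∏ p ∈ QB, (((p:ℝ) - 1) / 2) :=
            mul_le_mul_of_nonneg_right hsB (le_of_lt hDBpos)
        _ ≤ a := by rw [← hsplitD]; exact hB_le
  · -- cA = 12, cB = 1/2
    apply main_case n hn a ha m 12 (1/2) (Or.inr ⟨rfl, rfl⟩)
    · calc (n:ℝ) ≤ a * ∏ p ∈ Q, (2 * (p:ℝ) / ((p:ℝ) - 1)) := hn_le
        _ = a * ((∏ p ∈ Q.filter (fun p => p < 7), (2 * (p:ℝ) / ((p:ℝ) - 1)))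
              * ∏ p ∈ QB, (2 * (p:ℝ) / ((p:ℝ) - 1))) := by rw [hsplitU]
        _ ≤ a * (12 * Uprod m) := by
            apply mul_le_mul_of_nonneg_left _ (le_of_lt ha0)
            exact mul_le_mul hsA hUm (le_of_lt hUBpos) (by norm_num)
    · calc (1:ℝ)/2 * Dprod m ≤ 1/2 * ∏ p ∈ QB, (((p:ℝ) - 1) / 2) := by
            apply mul_le_mul_of_nonneg_left hDm (by norm_num)
        _ ≤ (∏ p ∈ Q.filter (fun p => p < 7), (((p:ℝ) - 1) / 2))
              * ∏ p ∈ QB, (((p:ℝ) - 1) / 2) :=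
            mul_le_mul_of_nonneg_right hsB (le_of_lt hDBpos)
        _ ≤ a := by rw [← hsplitD]; exact hB_le
end

section
/- Let P_i denote the i-th prime number, and for a positive integer s set M_s = ∏_{i=1}^s P_i, A_s = ∏_{i=1}^s P_i/(P_i − 1), and c_s = log(M_s/(2^s A_s)). Then for every integer s ≥ 6 one has c_s > e and (1/2)·log(2^s A_s) < c_s / log c_s. -/
private lemma log_le_num {q v : ℝ} (n k : ℕ) (hn : 0 < n) (hq : 0 < q)
    (hv : (k : ℝ) * 0.6931471808 + (q ^ n / 2 ^ k - 1) ≤ (n : ℝ) * v) :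
    Real.log q ≤ v := by
  have hm : (0:ℝ) < q ^ n / 2 ^ k := by positivity
  have key : (n : ℝ) * Real.log q = (k : ℝ) * Real.log 2 + Real.log (q ^ n / 2 ^ k) := by
    rw [Real.log_div (by positivity) (by positivity), Real.log_pow, Real.log_pow]; ring
  have h1 : Real.log (q ^ n / 2 ^ k) ≤ q ^ n / 2 ^ k - 1 := Real.log_le_sub_one_of_pos hm
  have h2 : Real.log 2 < 0.6931471808 := Real.log_two_lt_d9
  have hk : (0:ℝ) ≤ (k : ℝ) := Nat.cast_nonneg k
  have hn' : (0:ℝ) < (n : ℝ) := by exact_mod_cast hn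
  have h3 : (n : ℝ) * Real.log q ≤ (n : ℝ) * v := by
    nlinarith [mul_le_mul_of_nonneg_left h2.le hk]
  exact le_of_mul_le_mul_left h3 hn'

private lemma num_le_log {q v : ℝ} (n k : ℕ) (hn : 0 < n) (hq : 0 < q)
    (hv : (n : ℝ) * v ≤ (k : ℝ) * 0.6931471803 + (q ^ n / 2 ^ k - 1) / (q ^ n / 2 ^ k)) :
    v ≤ Real.log q := by
  have hm : (0:ℝ) < q ^ n / 2 ^ k := by positivity
  have key : (n : ℝ) * Real.log q = (k : ℝ) * Real.log 2 + Real.log (q ^ n / 2 ^ k) := by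
    rw [Real.log_div (by positivity) (by positivity), Real.log_pow, Real.log_pow]; ring
  have h1 : Real.log (q ^ n / 2 ^ k)⁻¹ ≤ (q ^ n / 2 ^ k)⁻¹ - 1 :=
    Real.log_le_sub_one_of_pos (by positivity)
  rw [Real.log_inv] at h1
  have h1' : (q ^ n / 2 ^ k - 1) / (q ^ n / 2 ^ k) ≤ Real.log (q ^ n / 2 ^ k) := by
    have he : (q ^ n / 2 ^ k - 1) / (q ^ n / 2 ^ k) = 1 - (q ^ n / 2 ^ k)⁻¹ := by
      field_simp
    rw [he]; linarith
  have h2 : (0.6931471803 : ℝ) < Real.log 2 := Real.log_two_gt_d9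
  have hk : (0:ℝ) ≤ (k : ℝ) := Nat.cast_nonneg k
  have hn' : (0:ℝ) < (n : ℝ) := by exact_mod_cast hn
  have h3 : (n : ℝ) * v ≤ (n : ℝ) * Real.log q := by
    nlinarith [mul_le_mul_of_nonneg_left h2.le hk]
  exact le_of_mul_le_mul_left h3 hn'

private lemma mul_log_le {a b : ℝ} (ha : 0 < a) (hab : a ≤ b) :
    a * Real.log b ≤ a * Real.log a + (b - a) := by
  have hb : 0 < b := lt_of_lt_of_le ha hab
  have h : Real.log (b / a) ≤ b / a - 1 := Real.log_le_sub_one_of_pos (by positivity)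
  rw [Real.log_div (ne_of_gt hb) (ne_of_gt ha)] at h
  have h2 := mul_le_mul_of_nonneg_left h ha.le
  have h3 : a * (b / a - 1) = b - a := by field_simp
  nlinarith

private lemma fdiv_mono {a b : ℝ} (ha : Real.exp 1 ≤ a) (hab : a ≤ b) :
    a / Real.log a ≤ b / Real.log b := by
  have ha0 : 0 < a := lt_of_lt_of_le (Real.exp_pos 1) ha
  have hb0 : 0 < b := lt_of_lt_of_le ha0 hab
  have hla : 1 ≤ Real.log a := by
    have := Real.log_le_log (Real.exp_pos 1) ha
    rwa [Real.log_exp] at this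
  have hlb : Real.log a ≤ Real.log b := Real.log_le_log ha0 hab
  have key := mul_log_le ha0 hab
  rw [div_le_div_iff₀ (by linarith) (by linarith)]
  nlinarith [mul_le_mul_of_nonneg_right hla (sub_nonneg.2 hab)]

private lemma fdiv_gain {a b : ℝ} (ha0 : 0 < a) (hab : a ≤ b) (hla : 1 ≤ Real.log a) :
    a / Real.log a + (b - a) * (Real.log a - 1) / (Real.log a * Real.log b)
      ≤ b / Real.log b := by
  have hb0 : 0 < b := lt_of_lt_of_le ha0 hab
  have hlb : Real.log a ≤ Real.log b := Real.log_le_log ha0 hab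
  have hla0 : (0:ℝ) < Real.log a := by linarith
  have hlb0 : (0:ℝ) < Real.log b := by linarith
  have key := mul_log_le ha0 hab
  have key2 : a * Real.log b + (b - a) * (Real.log a - 1) ≤ b * Real.log a := by nlinarith
  rw [div_add_div _ _ (ne_of_gt hla0) (by positivity), div_le_div_iff₀ (by positivity) hlb0]
  nlinarith [mul_le_mul_of_nonneg_right key2 (mul_pos hla0 hlb0).le]


private lemma nth_prime_eq {n k : ℕ} (hk : Nat.Prime k) (h : Nat.count Nat.Prime k = n) :
    Nat.nth Nat.Prime n = k := by rw [← h]; exact Nat.nth_count hk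

private lemma p0 : Nat.nth Nat.Prime 0 = 2 := nth_prime_eq (by norm_num) (by decide)
private lemma p1 : Nat.nth Nat.Prime 1 = 3 := nth_prime_eq (by norm_num) (by decide)
private lemma p2 : Nat.nth Nat.Prime 2 = 5 := nth_prime_eq (by norm_num) (by decide)
private lemma p3 : Nat.nth Nat.Prime 3 = 7 := nth_prime_eq (by norm_num) (by decide)
private lemma p4 : Nat.nth Nat.Prime 4 = 11 := nth_prime_eq (by norm_num) (by decide)
private lemma p5 : Nat.nth Nat.Prime 5 = 13 := nth_prime_eq (by norm_num) (by decide)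
private lemma p6 : Nat.nth Nat.Prime 6 = 17 := nth_prime_eq (by norm_num) (by decide)

private lemma nth_prime_ge (s : ℕ) (hs : 6 ≤ s) : 2 * s + 5 ≤ Nat.nth Nat.Prime s := by
  induction s, hs using Nat.le_induction with
  | base => rw [p6]
  | succ n hn ih =>
      have hlt : Nat.nth Nat.Prime n < Nat.nth Nat.Prime (n + 1) :=
        (Nat.nth_lt_nth Nat.infinite_setOf_prime).2 (Nat.lt_succ_self n)
      have h1 : (Nat.nth Nat.Prime n).Prime := Nat.prime_nth_prime n
      have h2 : (Nat.nth Nat.Prime (n+1)).Prime := Nat.prime_nth_prime (n+1)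
      have o1 : Nat.nth Nat.Prime n % 2 = 1 :=
        Nat.odd_iff.1 (h1.odd_of_ne_two (by omega))
      have o2 : Nat.nth Nat.Prime (n+1) % 2 = 1 :=
        Nat.odd_iff.1 (h2.odd_of_ne_two (by omega))
      omega

private lemma two_le_nth (i : ℕ) : (2:ℝ) ≤ (Nat.nth Nat.Prime i : ℝ) := by
  exact_mod_cast (Nat.prime_nth_prime i).two_le

private lemma prod_lower (s : ℕ) (hs : 6 ≤ s) :
    ((s+1).factorial : ℝ) / 56 ≤ ∏ i ∈ Finset.range s, ((Nat.nth Nat.Prime i : ℝ) - 1) / 2 := by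
  induction s, hs using Nat.le_induction with
  | base =>
      rw [show (6:ℕ) = 5+1 from rfl, Finset.prod_range_succ, Finset.prod_range_succ,
        Finset.prod_range_succ, Finset.prod_range_succ, Finset.prod_range_succ,
        Finset.prod_range_succ, Finset.prod_range_zero, p0, p1, p2, p3, p4, p5]
      norm_num [Nat.factorial]
  | succ n hn ih =>
      rw [Finset.prod_range_succ]
      have hp : (2 * (n:ℝ) + 5) ≤ (Nat.nth Nat.Prime n : ℝ) := by
        exact_mod_cast nth_prime_ge n hn
      have hfac : (((n+1)+1).factorial : ℝ) = ((n:ℝ) + 2) * ((n+1).factorial : ℝ) := by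
        rw [Nat.factorial_succ]; push_cast; ring
      have hpos : (0:ℝ) < ((n+1).factorial : ℝ) / 56 := by positivity
      have h2 : ((n:ℝ) + 2) ≤ ((Nat.nth Nat.Prime n : ℝ) - 1) / 2 := by linarith
      calc (((n+1)+1).factorial : ℝ) / 56 = ((n+1).factorial : ℝ) / 56 * ((n:ℝ) + 2) := by
            rw [hfac]; ring
        _ ≤ (∏ i ∈ Finset.range n, ((Nat.nth Nat.Prime i : ℝ) - 1) / 2)
              * (((Nat.nth Nat.Prime n : ℝ) - 1) / 2) :=
            mul_le_mul ih h2 (by positivity) (le_trans hpos.le ih)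

private lemma prod_A_upper (s : ℕ) (hs : 6 ≤ s) :
    ∏ i ∈ Finset.range s, ((Nat.nth Nat.Prime i : ℝ) / ((Nat.nth Nat.Prime i : ℝ) - 1))
      ≤ 1001 * ((s:ℝ) + 2) / 1536 := by
  induction s, hs using Nat.le_induction with
  | base =>
      rw [show (6:ℕ) = 5+1 from rfl, Finset.prod_range_succ, Finset.prod_range_succ,
        Finset.prod_range_succ, Finset.prod_range_succ, Finset.prod_range_succ,
        Finset.prod_range_succ, Finset.prod_range_zero, p0, p1, p2, p3, p4, p5]
      norm_num
  | succ n hn ih =>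
      rw [Finset.prod_range_succ]
      have hp : (2 * (n:ℝ) + 5) ≤ (Nat.nth Nat.Prime n : ℝ) := by
        exact_mod_cast nth_prime_ge n hn
      have hn1 : (1:ℝ) ≤ (Nat.nth Nat.Prime n : ℝ) - 1 := by linarith
      have hfrac : (Nat.nth Nat.Prime n : ℝ) / ((Nat.nth Nat.Prime n : ℝ) - 1)
          ≤ (2 * (n:ℝ) + 5) / (2 * (n:ℝ) + 4) := by
        rw [div_le_div_iff₀ (by linarith) (by positivity)]
        nlinarith
      have hprodnn : (0:ℝ) ≤ ∏ i ∈ Finset.range n,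
          ((Nat.nth Nat.Prime i : ℝ) / ((Nat.nth Nat.Prime i : ℝ) - 1)) := by
        apply Finset.prod_nonneg
        intro i _
        have := two_le_nth i
        exact div_nonneg (by linarith) (by linarith)
      have step : (∏ i ∈ Finset.range n,
          ((Nat.nth Nat.Prime i : ℝ) / ((Nat.nth Nat.Prime i : ℝ) - 1)))
            * ((Nat.nth Nat.Prime n : ℝ) / ((Nat.nth Nat.Prime n : ℝ) - 1))
          ≤ (1001 * ((n:ℝ) + 2) / 1536) * ((2 * (n:ℝ) + 5) / (2 * (n:ℝ) + 4)) := by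
        apply mul_le_mul ih hfrac (div_nonneg (by linarith [two_le_nth n]) (by linarith)) (by positivity)
      refine le_trans step ?_
      rw [div_mul_div_comm, div_le_div_iff₀ (by positivity) (by norm_num)]
      push_cast
      nlinarith [sq_nonneg ((n:ℝ))]

private lemma ratio_eq (s : ℕ) :
    (∏ i ∈ Finset.range s, (Nat.nth Nat.Prime i : ℝ)) /
      (2 ^ s * ∏ i ∈ Finset.range s,
        ((Nat.nth Nat.Prime i : ℝ) / ((Nat.nth Nat.Prime i : ℝ) - 1)))
      = ∏ i ∈ Finset.range s, ((Nat.nth Nat.Prime i : ℝ) - 1) / 2 := by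
  have hApos : (0:ℝ) < ∏ i ∈ Finset.range s,
      ((Nat.nth Nat.Prime i : ℝ) / ((Nat.nth Nat.Prime i : ℝ) - 1)) := by
    apply Finset.prod_pos
    intro i _
    have := two_le_nth i
    apply div_pos <;> linarith
  rw [div_eq_iff (by positivity)]
  rw [show (2:ℝ) ^ s = ∏ _i ∈ Finset.range s, (2:ℝ) by
    rw [Finset.prod_const, Finset.card_range]]
  rw [← Finset.prod_mul_distrib, ← Finset.prod_mul_distrib]
  apply Finset.prod_congr rfl
  intro i _
  have h := two_le_nth i
  have h1 : (Nat.nth Nat.Prime i : ℝ) - 1 ≠ 0 := by linarith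
  field_simp


set_option maxHeartbeats 1000000 in
private lemma ub_r6 : Real.log (1001/192 : ℝ) ≤ 1.6519 :=
  log_le_num 40 95 (by norm_num) (by norm_num) (by norm_num)

set_option maxHeartbeats 1000000 in
private lemma ub_r7 : Real.log (3003/512 : ℝ) ≤ 1.7691 :=
  log_le_num 40 102 (by norm_num) (by norm_num) (by norm_num)

set_option maxHeartbeats 1000000 in
private lemma ub_r8 : Real.log (5005/768 : ℝ) ≤ 1.8746 :=
  log_le_num 40 108 (by norm_num) (by norm_num) (by norm_num)

set_option maxHeartbeats 1000000 in
private lemma ub_r9 : Real.log (11011/1536 : ℝ) ≤ 1.9704 :=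
  log_le_num 40 114 (by norm_num) (by norm_num) (by norm_num)

set_option maxHeartbeats 1000000 in
private lemma ub_90 : Real.log (90 : ℝ) ≤ 4.5005 :=
  log_le_num 40 260 (by norm_num) (by norm_num)
    (by rw [show (2:ℝ) ^ 260 = (2 ^ 130) ^ 2 by rw [← pow_mul]]; norm_num)

set_option maxHeartbeats 1000000 in
private lemma ub_720 : Real.log (720 : ℝ) ≤ 6.5799 :=
  log_le_num 40 380 (by norm_num) (by norm_num)
    (by rw [show (2:ℝ) ^ 380 = (2 ^ 190) ^ 2 by rw [← pow_mul]]; norm_num)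

set_option maxHeartbeats 1000000 in
private lemma ub_6480 : Real.log (6480 : ℝ) ≤ 8.778 :=
  log_le_num 40 506 (by norm_num) (by norm_num)
    (by rw [show (2:ℝ) ^ 506 = (2 ^ 253) ^ 2 by rw [← pow_mul]]; norm_num)

set_option maxHeartbeats 1000000 in
private lemma ub_64800 : Real.log (64800 : ℝ) ≤ 11.0799 :=
  log_le_num 40 639 (by norm_num) (by norm_num)
    (by rw [show (2:ℝ) ^ 639 = (2 ^ 213) ^ 3 by rw [← pow_mul]]; norm_num)

set_option maxHeartbeats 1000000 in
private lemma ub_L26 : Real.log (4.5005 : ℝ) ≤ 1.5045 :=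
  log_le_num 40 87 (by norm_num) (by norm_num) (by norm_num)

set_option maxHeartbeats 1000000 in
private lemma ub_L27 : Real.log (6.5799 : ℝ) ≤ 1.8845 :=
  log_le_num 40 109 (by norm_num) (by norm_num) (by norm_num)

set_option maxHeartbeats 1000000 in
private lemma ub_L28 : Real.log (8.778 : ℝ) ≤ 2.1731 :=
  log_le_num 40 125 (by norm_num) (by norm_num) (by norm_num)

set_option maxHeartbeats 1000000 in
private lemma ub_L29 : Real.log (11.0799 : ℝ) ≤ 2.4054 :=
  log_le_num 40 139 (by norm_num) (by norm_num) (by norm_num)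

set_option maxHeartbeats 1000000 in
private lemma lb_90 : (4.4991 : ℝ) ≤ Real.log (90 : ℝ) :=
  num_le_log 40 260 (by norm_num) (by norm_num)
    (by rw [show (2:ℝ) ^ 260 = (2 ^ 130) ^ 2 by rw [← pow_mul]]; norm_num)

set_option maxHeartbeats 1000000 in
private lemma lb_720 : (6.5785 : ℝ) ≤ Real.log (720 : ℝ) :=
  num_le_log 40 380 (by norm_num) (by norm_num)
    (by rw [show (2:ℝ) ^ 380 = (2 ^ 190) ^ 2 by rw [← pow_mul]]; norm_num)

set_option maxHeartbeats 1000000 in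
private lemma lb_6480 : (8.7752 : ℝ) ≤ Real.log (6480 : ℝ) :=
  num_le_log 40 506 (by norm_num) (by norm_num)
    (by rw [show (2:ℝ) ^ 506 = (2 ^ 253) ^ 2 by rw [← pow_mul]]; norm_num)

set_option maxHeartbeats 1000000 in
private lemma lb_64800 : (11.0783 : ℝ) ≤ Real.log (64800 : ℝ) :=
  num_le_log 40 639 (by norm_num) (by norm_num)
    (by rw [show (2:ℝ) ^ 639 = (2 ^ 213) ^ 3 by rw [← pow_mul]]; norm_num)

set_option maxHeartbeats 1000000 in
private lemma lb_11 : (2.39 : ℝ) ≤ Real.log (11 : ℝ) :=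
  num_le_log 5 17 (by norm_num) (by norm_num) (by norm_num)


private lemma core_numeric {S F r L1 L2 lam2 uR : ℝ}
    (hF : 0 < F) (hr : 0 < r)
    (h1 : Real.log r ≤ uR) (h2 : L1 ≤ Real.log F) (h3 : Real.log F ≤ L2)
    (h4 : Real.log L2 ≤ lam2) (hL1 : 1 < L1)
    (hfin : (S * 0.6931471808 + uR) / 2 < L1 / lam2) (hS : 0 ≤ S) :
    (S * Real.log 2 + Real.log r) / 2 < Real.log F / Real.log (Real.log F) := by
  have hlogF : 1 < Real.log F := lt_of_lt_of_le hL1 h2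
  have h5 : 0 < Real.log (Real.log F) := Real.log_pos hlogF
  have h6 : Real.log (Real.log F) ≤ lam2 :=
    le_trans (Real.log_le_log (by linarith) h3) h4
  have h7 : L1 / lam2 ≤ Real.log F / Real.log (Real.log F) :=
    div_le_div₀ (by linarith) h2 h5 h6
  have hl2 : Real.log 2 < 0.6931471808 := Real.log_two_lt_d9
  nlinarith [mul_le_mul_of_nonneg_left hl2.le hS]

set_option maxHeartbeats 1000000 in
private lemma core9 (s : ℕ) (h9 : 9 ≤ s) :
    ((s:ℝ) * Real.log 2 + Real.log (1001 * ((s:ℝ) + 2) / 1536)) / 2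
      < Real.log (((s+1).factorial : ℝ) / 56)
        / Real.log (Real.log (((s+1).factorial : ℝ) / 56)) := by
  induction s, h9 using Nat.le_induction with
  | base =>
      have hF : (((9+1).factorial : ℕ) : ℝ) / 56 = 64800 := by
        norm_num [Nat.factorial]
      have hr : 1001 * (((9:ℕ):ℝ) + 2) / 1536 = 11011/1536 := by norm_num
      rw [hF, hr]
      exact core_numeric (by norm_num) (by norm_num) ub_r9 lb_64800 ub_64800 ub_L29
        (by norm_num) (by norm_num) (by norm_num)
  | succ n hn ih =>
      have hfacpos : (0:ℝ) < ((n+1).factorial : ℝ) / 56 := by positivity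
      have hfac2pos : (0:ℝ) < (((n+1)+1).factorial : ℝ) / 56 := by positivity
      set a := Real.log (((n+1).factorial : ℝ) / 56) with ha_def
      set b := Real.log ((((n+1)+1).factorial : ℝ) / 56) with hb_def
      set x := Real.log ((n:ℝ) + 2) with hx_def
      have hn9 : (9:ℝ) ≤ (n:ℝ) := by exact_mod_cast hn
      have h64800 : (64800:ℝ) ≤ ((n+1).factorial : ℝ) / 56 := by
        have hnat : (3628800:ℕ) ≤ (n+1).factorial := by
          calc (3628800:ℕ) = Nat.factorial 10 := by norm_num [Nat.factorial]
            _ ≤ (n+1).factorial := Nat.factorial_le (by omega)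
        have : (3628800:ℝ) ≤ ((n+1).factorial : ℝ) := by exact_mod_cast hnat
        linarith
      have ha11 : (11:ℝ) ≤ a := by
        have := Real.log_le_log (by norm_num) h64800
        have h2 : (11:ℝ) ≤ Real.log (64800:ℝ) := by linarith [lb_64800]
        linarith
      have hx239 : (2.39:ℝ) ≤ x := by
        have h11 : (11:ℝ) ≤ (n:ℝ) + 2 := by linarith
        have := Real.log_le_log (by norm_num) h11
        linarith [lb_11]
      have ht : (2.39:ℝ) ≤ Real.log a := by
        have := Real.log_le_log (by norm_num) ha11
        linarith [lb_11]
      have hb_eq : b = a + x := by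
        have hsp : ((((n+1)+1).factorial : ℕ) : ℝ) / 56
            = ((n:ℝ) + 2) * (((n+1).factorial : ℝ) / 56) := by
          rw [Nat.factorial_succ]
          push_cast
          ring
        rw [hb_def, hsp, Real.log_mul (by positivity) (ne_of_gt hfacpos)]
        ring
      have hxpos : (0:ℝ) < x := by linarith
      have hab : a ≤ b := by rw [hb_eq]; linarith
      have hb11 : (11:ℝ) ≤ b := by linarith
      have hu : Real.log b ≤ x + Real.log x := by
        have hfl : ((((n+1)+1).factorial : ℕ) : ℝ) ≤ ((n:ℝ) + 2) ^ (n + 2) := by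
          have h2 : (((n+2).factorial : ℕ) : ℝ) ≤ (((n+2) ^ (n+2) : ℕ) : ℝ) := by
            exact_mod_cast Nat.factorial_le_pow (n + 2)
          push_cast at h2 ⊢
          convert h2 using 2 <;> ring
        have hble : b ≤ ((n:ℝ) + 2) * x := by
          have h1 : ((((n+1)+1).factorial : ℕ) : ℝ) / 56 ≤ ((n:ℝ) + 2) ^ (n + 2) :=
            le_trans (div_le_self (by positivity) (by norm_num)) hfl
          have h2 := Real.log_le_log hfac2pos h1
          rw [Real.log_pow] at h2
          rw [hb_def]
          push_cast at h2
          linarith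
        calc Real.log b ≤ Real.log (((n:ℝ) + 2) * x) :=
              Real.log_le_log (by linarith) hble
          _ = x + Real.log x := by
              rw [Real.log_mul (by positivity) (ne_of_gt hxpos)]
      have hlogx : Real.log x ≤ 0.368 * x := by
        have h1 : Real.log (x / Real.exp 1) ≤ x / Real.exp 1 - 1 :=
          Real.log_le_sub_one_of_pos (by positivity)
        rw [Real.log_div (ne_of_gt hxpos) (Real.exp_ne_zero 1), Real.log_exp] at h1
        have h2 : x / Real.exp 1 ≤ 0.368 * x := by
          rw [div_le_iff₀ (Real.exp_pos 1)]
          nlinarith [Real.exp_one_gt_d9]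
        linarith
      have hlb_pos : (0:ℝ) < Real.log b := by
        have := Real.log_le_log (by linarith : (0:ℝ) < a) hab
        linarith
      have htu : (0:ℝ) < Real.log a * Real.log b := mul_pos (by linarith) hlb_pos
      have hkey : 0.8 * (Real.log a * Real.log b) ≤ 2 * (x * (Real.log a - 1)) := by
        have hu' : Real.log b ≤ 1.368 * x := by linarith
        nlinarith [mul_le_mul_of_nonneg_left hu'
          (by linarith : (0:ℝ) ≤ 0.8 * Real.log a)]
      have hC : Real.log 2 + Real.log (((n:ℝ) + 3) / ((n:ℝ) + 2)) ≤ 0.8 := by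
        have h1 : ((n:ℝ) + 3) / ((n:ℝ) + 2) ≤ 12 / 11 := by
          rw [div_le_div_iff₀ (by positivity) (by norm_num)]
          linarith
        have h2 : Real.log (((n:ℝ) + 3) / ((n:ℝ) + 2)) ≤ 12 / 11 - 1 :=
          le_trans (Real.log_le_log (by positivity) h1)
            (Real.log_le_sub_one_of_pos (by norm_num))
        linarith [Real.log_two_lt_d9]
      have hgain := fdiv_gain (show (0:ℝ) < a by linarith) hab
        (by linarith : 1 ≤ Real.log a)
      have hramp : (Real.log 2 + Real.log (((n:ℝ) + 3) / ((n:ℝ) + 2))) / 2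
          ≤ (b - a) * (Real.log a - 1) / (Real.log a * Real.log b) := by
        rw [div_le_div_iff₀ (by norm_num) htu]
        have hba : b - a = x := by rw [hb_eq]; ring
        rw [hba]
        nlinarith [mul_le_mul_of_nonneg_right hC htu.le]
      have h2ne : ((n:ℝ) + 2) ≠ 0 := by positivity
      have hsplit : Real.log (1001 * (((n:ℝ) + 1) + 2) / 1536)
          = Real.log (1001 * ((n:ℝ) + 2) / 1536)
            + Real.log (((n:ℝ) + 3) / ((n:ℝ) + 2)) := by
        rw [← Real.log_mul (by positivity) (by positivity)]
        congr 1
        field_simp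
        ring
      push_cast
      rw [hsplit]
      push_cast at ih
      linarith [ih, hgain, hramp]

private lemma core (s : ℕ) (hs : 6 ≤ s) :
    ((s:ℝ) * Real.log 2 + Real.log (1001 * ((s:ℝ) + 2) / 1536)) / 2
      < Real.log (((s+1).factorial : ℝ) / 56)
        / Real.log (Real.log (((s+1).factorial : ℝ) / 56)) := by
  rcases le_or_gt 9 s with h9 | h9
  · exact core9 s h9
  · interval_cases s
    · have hF : (((6+1).factorial : ℕ) : ℝ) / 56 = 90 := by norm_num [Nat.factorial]
      have hr : 1001 * (((6:ℕ):ℝ) + 2) / 1536 = 1001/192 := by norm_num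
      rw [hF, hr]
      exact core_numeric (by norm_num) (by norm_num) ub_r6 lb_90 ub_90 ub_L26
        (by norm_num) (by norm_num) (by norm_num)
    · have hF : (((7+1).factorial : ℕ) : ℝ) / 56 = 720 := by norm_num [Nat.factorial]
      have hr : 1001 * (((7:ℕ):ℝ) + 2) / 1536 = 3003/512 := by norm_num
      rw [hF, hr]
      exact core_numeric (by norm_num) (by norm_num) ub_r7 lb_720 ub_720 ub_L27
        (by norm_num) (by norm_num) (by norm_num)
    · have hF : (((8+1).factorial : ℕ) : ℝ) / 56 = 6480 := by norm_num [Nat.factorial]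
      have hr : 1001 * (((8:ℕ):ℝ) + 2) / 1536 = 5005/768 := by norm_num
      rw [hF, hr]
      exact core_numeric (by norm_num) (by norm_num) ub_r8 lb_6480 ub_6480 ub_L28
        (by norm_num) (by norm_num) (by norm_num)


/-- Let `P_i` be the `i`-th prime, `M_s = ∏_{i=1}^s P_i`,
`A_s = ∏_{i=1}^s P_i/(P_i - 1)` and `c_s = log (M_s / (2^s * A_s))`.
Then for every `s ≥ 6` one has `c_s > e` and
`(1/2) * log (2^s * A_s) < c_s / log c_s`. -/
theorem log_two_pow_mul_A_lt (s : ℕ) (hs : 6 ≤ s) (A M c : ℝ)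
    (hA : A = ∏ i ∈ Finset.range s,
        ((Nat.nth Nat.Prime i : ℝ) / ((Nat.nth Nat.Prime i : ℝ) - 1)))
    (hM : M = ∏ i ∈ Finset.range s, (Nat.nth Nat.Prime i : ℝ))
    (hc : c = Real.log (M / (2 ^ s * A))) :
    Real.exp 1 < c ∧ (1 / 2) * Real.log (2 ^ s * A) < c / Real.log c := by
  subst hA hM hc
  set A := ∏ i ∈ Finset.range s,
      ((Nat.nth Nat.Prime i : ℝ) / ((Nat.nth Nat.Prime i : ℝ) - 1)) with hA_def
  set P := ∏ i ∈ Finset.range s, ((Nat.nth Nat.Prime i : ℝ) - 1) / 2 with hP_def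
  have hApos : (0:ℝ) < A := by
    rw [hA_def]
    apply Finset.prod_pos
    intro i _
    have := two_le_nth i
    exact div_pos (by linarith) (by linarith)
  have hratio : (∏ i ∈ Finset.range s, (Nat.nth Nat.Prime i : ℝ)) / (2 ^ s * A) = P :=
    ratio_eq s
  have hfacpos : (0:ℝ) < ((s+1).factorial : ℝ) / 56 := by positivity
  have hPge : ((s+1).factorial : ℝ) / 56 ≤ P := prod_lower s hs
  have hf90 : (90:ℝ) ≤ ((s+1).factorial : ℝ) / 56 := by
    have h1 : (5040:ℕ) ≤ (s+1).factorial := by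
      calc (5040:ℕ) = Nat.factorial 7 := by norm_num [Nat.factorial]
        _ ≤ (s+1).factorial := Nat.factorial_le (by omega)
    have : (5040:ℝ) ≤ ((s+1).factorial : ℝ) := by exact_mod_cast h1
    linarith
  set L := Real.log (((s+1).factorial : ℝ) / 56) with hL_def
  have hLlb : (4.4991:ℝ) ≤ L := by
    have := Real.log_le_log (by norm_num) hf90
    linarith [lb_90]
  have hLc : L ≤ Real.log P := Real.log_le_log hfacpos hPge
  have hexpL : Real.exp 1 ≤ L := by
    have := Real.exp_one_lt_d9
    linarith
  rw [hratio]
  constructor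
  · have := Real.exp_one_lt_d9
    linarith
  · have hA_ub : A ≤ 1001 * ((s:ℝ) + 2) / 1536 := prod_A_upper s hs
    have h2s : (0:ℝ) < 2 ^ s := by positivity
    have h2A : Real.log (2 ^ s * A) ≤ Real.log (2 ^ s * (1001 * ((s:ℝ) + 2) / 1536)) := by
      apply Real.log_le_log (by positivity)
      exact mul_le_mul_of_nonneg_left hA_ub h2s.le
    have hexpand : Real.log (2 ^ s * (1001 * ((s:ℝ) + 2) / 1536))
        = (s:ℝ) * Real.log 2 + Real.log (1001 * ((s:ℝ) + 2) / 1536) := by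
      rw [Real.log_mul (by positivity) (by positivity), Real.log_pow]
    have hcore := core s hs
    have hmono := fdiv_mono hexpL hLc
    rw [hexpand] at h2A
    linarith
end
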